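/- arXiv:1708.01305 — 8 statements merged into one kernel-verified Lean document; each statement's English description precedes it below -/
import Mathlib

section
/- Let n ≥ 2 be an integer and let X_n be the unitary Cayley graph of ℤ/nℤ (vertices are elements of ℤ/nℤ, with x adjacent to y iff x - y is a unit). Then the set {0, 1, ..., g(n) - 1} is a total dominating set of X_n, where g(n) is the smallest positive integer m such that every set of m consecutive integers contains an element coprime to n. In particular, the total domination number of X_n is at most g(n). -/
/-- `D` is a dominating set of `G`. -/
def IsDomSet {V : Type*} (G : SimpleGraph V) (D : Set V) : Prop :=
  ∀ v, v ∈ D ∨ ∃ d ∈ D, G.Adj v d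

/-- `D` is a total dominating set of `G`. -/
def IsTotalDomSet {V : Type*} (G : SimpleGraph V) (D : Set V) : Prop :=
  ∀ v, ∃ d ∈ D, G.Adj v d

/-- `D` is a minimal dominating set of `G`. -/
def IsMinimalDomSet {V : Type*} (G : SimpleGraph V) (D : Set V) : Prop :=
  IsDomSet G D ∧ ∀ D' ⊂ D, ¬ IsDomSet G D'

/-- The domination number of `G`. -/
noncomputable def domNum {V : Type*} (G : SimpleGraph V) : ℕ :=
  sInf {k | ∃ D : Set V, IsDomSet G D ∧ D.ncard = k}

/-- The total domination number of `G`. -/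
noncomputable def totalDomNum {V : Type*} (G : SimpleGraph V) : ℕ :=
  sInf {k | ∃ D : Set V, IsTotalDomSet G D ∧ D.ncard = k}

/-- The upper domination number of `G`. -/
noncomputable def upperDomNum {V : Type*} (G : SimpleGraph V) : ℕ :=
  sSup {k | ∃ D : Set V, IsMinimalDomSet G D ∧ D.ncard = k}

/-- Jacobsthal's function. -/
noncomputable def jacobsthal (n : ℕ) : ℕ :=
  sInf {m | 0 < m ∧ ∀ x : ℤ, ∃ i : ℕ, i < m ∧ Int.gcd (x + i) n = 1}

/-- The unitary Cayley graph of `ℤ/nℤ`. -/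
def unitaryCayley (n : ℕ) : SimpleGraph (ZMod n) where
  Adj x y := x ≠ y ∧ IsUnit (x - y)
  symm := ⟨by
    rintro x y ⟨h1, h2⟩
    exact ⟨h1.symm, by simpa [neg_sub] using h2.neg⟩⟩
  loopless := ⟨by rintro x ⟨h, _⟩; exact h rfl⟩

/-- The direct product of complete graphs `K_{n 0} × ⋯ × K_{n (t-1)}`. -/
def completeProd (t : ℕ) (n : Fin t → ℕ) : SimpleGraph (∀ i, ZMod (n i)) where
  Adj x y := x ≠ y ∧ ∀ i, x i ≠ y i
  symm := ⟨by rintro x y ⟨h1, h2⟩; exact ⟨h1.symm, fun i => (h2 i).symm⟩⟩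
  loopless := ⟨by rintro x ⟨h, _⟩; exact h rfl⟩

/-- The direct product of balanced complete multipartite graphs
`K[a 0, b 0] × ⋯ × K[a (t-1), b (t-1)]`, where `K[a,b]` has vertex set `ZMod (a*b)`
with `x ~ y` iff `x ≢ y (mod b)`. -/
def multipartiteProd (t : ℕ) (a b : Fin t → ℕ) :
    SimpleGraph (∀ i, ZMod (a i * b i)) where
  Adj x y := x ≠ y ∧ ∀ i, (x i).val % b i ≠ (y i).val % b i
  symm := ⟨by rintro x y ⟨h1, h2⟩; exact ⟨h1.symm, fun i => (h2 i).symm⟩⟩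
  loopless := ⟨by rintro x ⟨h, _⟩; exact h rfl⟩

/-- The direct (tensor) product of two graphs. -/
def directProd {V W : Type*} (G : SimpleGraph V) (H : SimpleGraph W) :
    SimpleGraph (V × W) where
  Adj x y := G.Adj x.1 y.1 ∧ H.Adj x.2 y.2
  symm := ⟨by rintro x y ⟨h1, h2⟩; exact ⟨h1.symm, h2.symm⟩⟩
  loopless := ⟨by rintro x ⟨h, _⟩; exact G.loopless.irrefl _ h⟩

lemma jac_mem (n : ℕ) (hn : 2 ≤ n) :
    0 < jacobsthal n ∧
    ∀ x : ℤ, ∃ i : ℕ, i < jacobsthal n ∧ Int.gcd (x + i) n = 1 := by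
  have hn0 : (0:ℤ) < n := by exact_mod_cast Nat.lt_of_lt_of_le (by norm_num) hn
  have hne : {m | 0 < m ∧ ∀ x : ℤ, ∃ i : ℕ, i < m ∧ Int.gcd (x + i) n = 1}.Nonempty := by
    refine ⟨n, Nat.lt_of_lt_of_le (by norm_num) hn, fun x => ?_⟩
    set r : ℤ := (1 - x) % n with hr
    have hrnn : 0 ≤ r := Int.emod_nonneg _ (by positivity)
    have hrlt : r < n := Int.emod_lt_of_pos _ hn0
    refine ⟨r.toNat, by omega, ?_⟩
    have hcast : (r.toNat : ℤ) = r := Int.toNat_of_nonneg hrnn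
    have hq : x + r.toNat = 1 - n * ((1 - x) / n) := by
      rw [hcast, hr, Int.emod_def]; ring
    rw [← Int.isCoprime_iff_gcd_eq_one]
    exact ⟨1, (1 - x) / n, by rw [hq]; ring⟩
  exact Nat.sInf_mem hne

lemma unit_of_gcd (n : ℕ) (a : ℤ) (h : Int.gcd a n = 1) :
    IsUnit ((a : ZMod n)) := by
  obtain ⟨u, v, huv⟩ := Int.isCoprime_iff_gcd_eq_one.mpr h
  apply IsUnit.of_mul_eq_one (u : ZMod n)
  have := congrArg (fun z : ℤ => (z : ZMod n)) huv
  push_cast at this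
  rw [ZMod.natCast_self] at this
  simpa [mul_comm] using this

theorem stmt0 (n : ℕ) (hn : 2 ≤ n) :
    IsTotalDomSet (unitaryCayley n)
      {x : ZMod n | ∃ i : ℕ, i < jacobsthal n ∧ x = (i : ZMod n)} ∧
    totalDomNum (unitaryCayley n) ≤ jacobsthal n := by
  haveI : Fact (1 < n) := ⟨hn⟩
  obtain ⟨hgpos, hg⟩ := jac_mem n hn
  have htd : IsTotalDomSet (unitaryCayley n)
      {x : ZMod n | ∃ i : ℕ, i < jacobsthal n ∧ x = (i : ZMod n)} := by
    intro v
    obtain ⟨i, hi, hgcd⟩ := hg (-(v.val : ℤ))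
    refine ⟨(i : ZMod n), ⟨i, hi, rfl⟩, ?_, ?_⟩
    · intro hvi
      have hu := unit_of_gcd n _ hgcd
      rw [show ((-(v.val : ℤ) + i : ℤ) : ZMod n) = (i : ZMod n) - v by
        push_cast [ZMod.natCast_val, ZMod.cast_id]; ring] at hu
      rw [← hvi, sub_self] at hu
      exact not_isUnit_zero hu
    · have hu := unit_of_gcd n _ hgcd
      rw [show ((-(v.val : ℤ) + i : ℤ) : ZMod n) = (i : ZMod n) - v by
        push_cast [ZMod.natCast_val, ZMod.cast_id]; ring] at hu
      simpa [neg_sub] using hu.neg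
  refine ⟨htd, ?_⟩
  have hle : totalDomNum (unitaryCayley n) ≤
      ({x : ZMod n | ∃ i : ℕ, i < jacobsthal n ∧ x = (i : ZMod n)} : Set (ZMod n)).ncard :=
    Nat.sInf_le ⟨_, htd, rfl⟩
  refine hle.trans ?_
  have hset : {x : ZMod n | ∃ i : ℕ, i < jacobsthal n ∧ x = (i : ZMod n)} =
      ↑((Finset.range (jacobsthal n)).image (Nat.cast : ℕ → ZMod n)) := by
    ext x; simp [eq_comm]
  rw [hset, Set.ncard_coe_finset]
  exact (Finset.card_image_le).trans (by simp)
end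

section
/- For any positive integers a₁,...,a_t and b₁,...,b_t, the domination number of the direct product of the balanced complete multipartite graphs K[a₁,b₁], ..., K[a_t,b_t] is at least the domination number of the direct product of the complete graphs K_{b₁}, ..., K_{b_t}. -/
theorem stmt1 (t : ℕ) (a b : Fin t → ℕ) (ha : ∀ i, 0 < a i) (hb : ∀ i, 0 < b i) :
    domNum (completeProd t b) ≤ domNum (multipartiteProd t a b) := by
  haveI : ∀ i, NeZero (b i) := fun i => ⟨(hb i).ne'⟩
  haveI : ∀ i, NeZero (a i * b i) := fun i => ⟨(Nat.mul_pos (ha i) (hb i)).ne'⟩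
  set φ : (∀ i, ZMod (a i * b i)) → (∀ i, ZMod (b i)) :=
    fun x i => ((x i).val % b i : ℕ) with hφ
  have key : ∀ (x y : ∀ i, ZMod (a i * b i)) (i),
      (x i).val % b i ≠ (y i).val % b i → φ x i ≠ φ y i := by
    intro x y i h heq
    apply h
    have := congrArg ZMod.val heq
    rwa [ZMod.val_cast_of_lt (Nat.mod_lt _ (hb i)),
      ZMod.val_cast_of_lt (Nat.mod_lt _ (hb i))] at this
  apply le_csInf
  · exact ⟨(Set.univ : Set (∀ i, ZMod (a i * b i))).ncard, Set.univ,
      fun v => Or.inl (Set.mem_univ v), rfl⟩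
  · rintro k ⟨D, hD, rfl⟩
    have hdom : IsDomSet (completeProd t b) (φ '' D) := by
      intro v
      set x : ∀ i, ZMod (a i * b i) := fun i => ((v i).val : ZMod (a i * b i)) with hxdef
      have hxval : ∀ i, (x i).val = (v i).val := by
        intro i
        exact ZMod.val_cast_of_lt (lt_of_lt_of_le (ZMod.val_lt _)
          (Nat.le_mul_of_pos_left _ (ha i)))
      have hx : φ x = v := by
        funext i
        simp only [hφ, hxval i, Nat.mod_eq_of_lt (ZMod.val_lt (v i))]
        exact ZMod.natCast_rightInverse (v i)
      rcases hD x with hx' | ⟨d, hd, hadj⟩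
      · exact Or.inl ⟨x, hx', hx⟩
      · refine Or.inr ⟨φ d, ⟨d, hd, rfl⟩, ?_, ?_⟩
        · obtain ⟨i, -⟩ := Function.ne_iff.mp hadj.1
          intro h
          exact key x d i (hadj.2 i) (by rw [hx]; exact congrFun h i)
        · intro i
          rw [← hx]
          exact key x d i (hadj.2 i)
    calc domNum (completeProd t b) ≤ (φ '' D).ncard :=
          Nat.sInf_le ⟨φ '' D, hdom, rfl⟩
      _ ≤ D.ncard := Set.ncard_image_le D.toFinite
end

section
/- Let G = K_{n₁} × K_{n₂} × ⋯ × K_{n_t} (direct product) with 2 ≤ n₁ ≤ n₂ ≤ ⋯ ≤ n_t, t ≥ 4, and n₂ ≥ 3. Then γ(G) ≥ t + 1 + ⌊(t-1)/(n₁-1)⌋. -/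
section Cover
open Finset

variable {t : ℕ} {n : Fin t → ℕ}

def cov [∀ i, NeZero (n i)] (C : Finset (Fin t)) (z : ∀ i, ZMod (n i))
    (R : Finset (∀ i, ZMod (n i))) : Finset (∀ i, ZMod (n i)) :=
  Finset.univ.filter (fun v => (∀ i, i ∉ C → v i = z i) ∧ ∀ d ∈ R, ∃ i ∈ C, v i = d i)

lemma mem_cov [∀ i, NeZero (n i)] {C : Finset (Fin t)} {z : ∀ i, ZMod (n i)}
    {R : Finset (∀ i, ZMod (n i))} {v : ∀ i, ZMod (n i)} :
    v ∈ cov C z R ↔ (∀ i, i ∉ C → v i = z i) ∧ ∀ d ∈ R, ∃ i ∈ C, v i = d i := by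
  simp [cov]

lemma cov_card_of_lt [∀ i, NeZero (n i)] {C : Finset (Fin t)} {z : ∀ i, ZMod (n i)}
    {R : Finset (∀ i, ZMod (n i))}
    (hsz : ∀ i ∈ C, 3 ≤ n i) (hR : R.Nonempty) (hlt : R.card < C.card) :
    2 * C.card + 1 ≤ (cov C z R).card := by
  classical
  obtain ⟨S, hSC, hScard⟩ := Finset.exists_subset_card_eq (le_of_lt hlt)
  let e : {x // x ∈ S} ≃ {x // x ∈ R} := Finset.equivOfCardEq hScard
  let rowOf : Fin t → (∀ i, ZMod (n i)) := fun j => if h : j ∈ S then (e ⟨j, h⟩ : _) else z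
  have hrow : ∀ j (h : j ∈ S), rowOf j = (e ⟨j, h⟩ : _) := fun j h => dif_pos h
  have hrow_surj : ∀ d ∈ R, ∃ j ∈ S, rowOf j = d := by
    intro d hd
    refine ⟨(e.symm ⟨d, hd⟩).1, (e.symm ⟨d, hd⟩).2, ?_⟩
    rw [hrow _ (e.symm ⟨d, hd⟩).2]
    have h1 : (⟨(e.symm ⟨d, hd⟩).1, (e.symm ⟨d, hd⟩).2⟩ : {x // x ∈ S}) = e.symm ⟨d, hd⟩ :=
      Subtype.ext rfl
    rw [h1, Equiv.apply_symm_apply]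
  let ustar : ∀ i, ZMod (n i) := fun i => if i ∈ S then rowOf i i else z i
  have hustar_in : ∀ j ∈ S, ustar j = rowOf j j := fun j h => if_pos h
  have hustar_out : ∀ j, j ∉ S → ustar j = z j := fun j h => if_neg h
  have hfree : (C \ S).Nonempty := by
    rw [← Finset.card_pos, Finset.card_sdiff_of_subset hSC]; omega
  obtain ⟨p₀, hp₀⟩ := hfree
  have hp₀C : p₀ ∈ C := (Finset.mem_sdiff.mp hp₀).1
  have hp₀S : p₀ ∉ S := (Finset.mem_sdiff.mp hp₀).2
  -- family A
  let gA : (Σ p : Fin t, ZMod (n p)) → (∀ i, ZMod (n i)) := fun x => Function.update ustar x.1 x.2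
  let sigA : Finset (Σ p : Fin t, ZMod (n p)) :=
    (C \ S).sigma (fun p => (Finset.univ.erase (ustar p)))
  let imA := sigA.image gA
  let A := insert ustar imA
  -- family B
  let gB : (Σ p : Fin t, ZMod (n p)) → (∀ i, ZMod (n i)) := fun x =>
    Function.update (Function.update ustar p₀ (rowOf x.1 p₀)) x.1 x.2
  let sigB : Finset (Σ p : Fin t, ZMod (n p)) :=
    S.sigma (fun j => (Finset.univ.erase (ustar j)))
  let imB := sigB.image gB
  -- evaluation lemmas
  have egA_self : ∀ x : (Σ p : Fin t, ZMod (n p)), gA x x.1 = x.2 :=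
    fun x => Function.update_self _ _ _
  have egA_ne : ∀ (x : Σ p : Fin t, ZMod (n p)) i, i ≠ x.1 → gA x i = ustar i :=
    fun x i h => Function.update_of_ne h _ _
  have egB_self : ∀ x : (Σ p : Fin t, ZMod (n p)), x.1 ∈ S → gB x x.1 = x.2 :=
    fun x _ => Function.update_self _ _ _
  have egB_p₀ : ∀ x : (Σ p : Fin t, ZMod (n p)), x.1 ∈ S → gB x p₀ = rowOf x.1 p₀ := by
    intro x hx
    have h1 : p₀ ≠ x.1 := fun h => hp₀S (h ▸ hx)
    show Function.update (Function.update ustar p₀ (rowOf x.1 p₀)) x.1 x.2 p₀ = rowOf x.1 p₀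
    rw [Function.update_of_ne h1, Function.update_self]
  have egB_ne : ∀ (x : Σ p : Fin t, ZMod (n p)) i, x.1 ∈ S → i ≠ x.1 → i ≠ p₀ →
      gB x i = ustar i := by
    intro x i _ h1 h2
    show Function.update (Function.update ustar p₀ (rowOf x.1 p₀)) x.1 x.2 i = ustar i
    rw [Function.update_of_ne h1, Function.update_of_ne h2]
  -- A elements agree with ustar on S
  have hA_agree : ∀ a ∈ A, ∀ j ∈ S, a j = ustar j := by
    intro a ha j hj
    rcases Finset.mem_insert.mp ha with rfl | ha
    · rfl
    · obtain ⟨x, hx, rfl⟩ := Finset.mem_image.mp ha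
      have hx1 := (Finset.mem_sigma.mp hx).1
      exact egA_ne x j (fun h => (Finset.mem_sdiff.mp hx1).2 (h ▸ hj))
  have hB_disagree : ∀ a ∈ imB, ∃ j ∈ S, a j ≠ ustar j := by
    intro a ha
    obtain ⟨x, hx, rfl⟩ := Finset.mem_image.mp ha
    have hx1 := (Finset.mem_sigma.mp hx).1
    have hx2 := (Finset.mem_sigma.mp hx).2
    exact ⟨x.1, hx1, by rw [egB_self x hx1]; exact (Finset.mem_erase.mp hx2).1⟩
  have hdisj : Disjoint A imB := by
    rw [Finset.disjoint_left]
    intro a ha hb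
    obtain ⟨j, hj, hne⟩ := hB_disagree a hb
    exact hne (hA_agree a ha j hj)
  -- A ⊆ cov
  have hA_cov : A ⊆ cov C z R := by
    intro a ha
    rw [mem_cov]
    constructor
    · intro i hi
      have hiS : i ∉ S := fun h => hi (hSC h)
      rcases Finset.mem_insert.mp ha with rfl | ha'
      · exact hustar_out i hiS
      · obtain ⟨x, hx, rfl⟩ := Finset.mem_image.mp ha'
        have hx1 := (Finset.mem_sigma.mp hx).1
        rw [egA_ne x i (fun h => hi (h ▸ (Finset.mem_sdiff.mp hx1).1))]
        exact hustar_out i hiS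
    · intro d hd
      obtain ⟨j, hjS, hjd⟩ := hrow_surj d hd
      refine ⟨j, hSC hjS, ?_⟩
      rw [hA_agree a ha j hjS, hustar_in j hjS, hjd]
  -- B ⊆ cov
  have hB_cov : imB ⊆ cov C z R := by
    intro a ha
    obtain ⟨x, hx, rfl⟩ := Finset.mem_image.mp ha
    have hx1 : x.1 ∈ S := (Finset.mem_sigma.mp hx).1
    rw [mem_cov]
    constructor
    · intro i hi
      have hiS : i ∉ S := fun h => hi (hSC h)
      rw [egB_ne x i hx1 (fun h => hiS (h ▸ hx1)) (fun h => hi (h ▸ hp₀C))]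
      exact hustar_out i hiS
    · intro d hd
      obtain ⟨j, hjS, hjd⟩ := hrow_surj d hd
      by_cases hjx : j = x.1
      · refine ⟨p₀, hp₀C, ?_⟩
        rw [egB_p₀ x hx1, ← hjx, hjd]
      · refine ⟨j, hSC hjS, ?_⟩
        have h2 : j ≠ p₀ := fun h => hp₀S (h ▸ hjS)
        rw [egB_ne x j hx1 hjx h2, hustar_in j hjS, hjd]
  -- cardinalities
  have hinjA : Set.InjOn gA sigA := by
    rintro ⟨p, c⟩ hx ⟨p', c'⟩ hy h
    have hc : c ≠ ustar p := (Finset.mem_erase.mp (Finset.mem_sigma.mp hx).2).1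
    by_cases hpp : p = p'
    · subst hpp
      have : c = c' := by
        have h1 := congrFun h p
        rwa [egA_self ⟨p, c⟩, egA_self ⟨p, c'⟩] at h1
      rw [this]
    · exfalso
      have h1 := congrFun h p
      rw [egA_self ⟨p, c⟩, egA_ne ⟨p', c'⟩ p hpp] at h1
      exact hc h1
  have hinjB : Set.InjOn gB sigB := by
    rintro ⟨p, c⟩ hx ⟨p', c'⟩ hy h
    have hpS : p ∈ S := (Finset.mem_sigma.mp hx).1
    have hp'S : p' ∈ S := (Finset.mem_sigma.mp hy).1
    have hc : c ≠ ustar p := (Finset.mem_erase.mp (Finset.mem_sigma.mp hx).2).1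
    by_cases hpp : p = p'
    · subst hpp
      have : c = c' := by
        have h1 := congrFun h p
        rwa [egB_self ⟨p, c⟩ hpS, egB_self ⟨p, c'⟩ hpS] at h1
      rw [this]
    · exfalso
      have hpp₀ : p ≠ p₀ := fun hh => hp₀S (hh ▸ hpS)
      have h1 := congrFun h p
      rw [egB_self ⟨p, c⟩ hpS, egB_ne ⟨p', c'⟩ p hp'S hpp hpp₀] at h1
      exact hc h1
  have hcardA : imA.card = ∑ p ∈ C \ S, (n p - 1) := by
    rw [Finset.card_image_of_injOn hinjA, Finset.card_sigma]
    refine Finset.sum_congr rfl (fun p _ => ?_)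
    rw [Finset.card_erase_of_mem (Finset.mem_univ _), Finset.card_univ, ZMod.card]
  have hcardB : imB.card = ∑ j ∈ S, (n j - 1) := by
    rw [Finset.card_image_of_injOn hinjB, Finset.card_sigma]
    refine Finset.sum_congr rfl (fun p _ => ?_)
    rw [Finset.card_erase_of_mem (Finset.mem_univ _), Finset.card_univ, ZMod.card]
  have hustar_nmem : ustar ∉ imA := by
    intro h
    obtain ⟨x, hx, hgx⟩ := Finset.mem_image.mp h
    have hc : x.2 ≠ ustar x.1 := (Finset.mem_erase.mp (Finset.mem_sigma.mp hx).2).1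
    exact hc (by rw [← hgx, egA_self])
  have hcardA' : A.card = ∑ p ∈ C \ S, (n p - 1) + 1 := by
    rw [Finset.card_insert_of_notMem hustar_nmem, hcardA]
  have hsum : ∑ p ∈ C \ S, (n p - 1) + ∑ j ∈ S, (n j - 1) = ∑ i ∈ C, (n i - 1) :=
    Finset.sum_sdiff hSC
  have hsum2 : C.card * 2 ≤ ∑ i ∈ C, (n i - 1) := by
    calc C.card * 2 = ∑ _i ∈ C, 2 := by rw [Finset.sum_const, smul_eq_mul]
    _ ≤ _ := Finset.sum_le_sum (fun i hi => by have := hsz i hi; omega)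
  have hunion : A ∪ imB ⊆ cov C z R := Finset.union_subset hA_cov hB_cov
  have hcardUnion : (A ∪ imB).card = A.card + imB.card := Finset.card_union_of_disjoint hdisj
  have := Finset.card_le_card hunion
  omega


lemma cov_card_main [∀ i, NeZero (n i)] {C : Finset (Fin t)} {z : ∀ i, ZMod (n i)}
    {R : Finset (∀ i, ZMod (n i))}
    (hsz : ∀ i ∈ C, 3 ≤ n i) (h3 : 3 ≤ C.card) (hle : R.card ≤ C.card) :
    2 * C.card + 2 ≤ (cov C z R).card + R.card := by
  classical
  rcases Nat.eq_zero_or_pos R.card with hr0 | hrpos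
  · -- R is empty
    have hRempty : R = ∅ := Finset.card_eq_zero.mp hr0
    subst hRempty
    -- use covers of {z} plus one extra vector
    have hz1 : ({z} : Finset (∀ i, ZMod (n i))).card < C.card := by
      rw [Finset.card_singleton]; omega
    have hlem := cov_card_of_lt (z := z) hsz ⟨z, Finset.mem_singleton_self z⟩ hz1
    set v₁ : ∀ i, ZMod (n i) := fun i => if i ∈ C then z i + 1 else z i with hv₁
    have hv₁mem : v₁ ∈ cov C z (∅ : Finset (∀ i, ZMod (n i))) := by
      rw [mem_cov]
      exact ⟨fun i hi => if_neg hi, fun d hd => absurd hd (Finset.notMem_empty d)⟩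
    have hv₁nmem : v₁ ∉ cov C z ({z} : Finset (∀ i, ZMod (n i))) := by
      intro h
      obtain ⟨i, hiC, hi⟩ := (mem_cov.mp h).2 z (Finset.mem_singleton_self z)
      have hzz : z i + 1 = z i := by simpa [v₁, hiC] using hi
      haveI : Fact (1 < n i) := ⟨by have := hsz i hiC; omega⟩
      exact one_ne_zero (add_eq_left.mp hzz)
    have hsub : insert v₁ (cov C z ({z} : Finset (∀ i, ZMod (n i)))) ⊆
        cov C z (∅ : Finset (∀ i, ZMod (n i))) := by
      intro a ha
      rcases Finset.mem_insert.mp ha with rfl | ha'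
      · exact hv₁mem
      · rw [mem_cov] at ha' ⊢
        exact ⟨ha'.1, fun d hd => absurd hd (Finset.notMem_empty d)⟩
    have h4 := Finset.card_le_card hsub
    rw [Finset.card_insert_of_notMem hv₁nmem] at h4
    simp only [Finset.card_empty]
    omega
  · rcases lt_or_eq_of_le hle with hltC | heqC
    · -- 1 ≤ r < m
      have := cov_card_of_lt (z := z) hsz (Finset.card_pos.mp hrpos) hltC
      omega
    · -- r = m
      by_cases hcol : ∃ p ∈ C, ∃ d₁ ∈ R, ∃ d₂ ∈ R, d₁ ≠ d₂ ∧ d₁ p = d₂ p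
      · obtain ⟨p, hpC, d₁, hd₁, d₂, hd₂, hne, heq⟩ := hcol
        set C' := C.erase p with hC'
        set R' := (R.erase d₁).erase d₂ with hR'
        set z' := Function.update z p (d₁ p) with hz'
        have hC'card : C'.card = C.card - 1 := Finset.card_erase_of_mem hpC
        have hd₂' : d₂ ∈ R.erase d₁ := Finset.mem_erase.mpr ⟨Ne.symm hne, hd₂⟩
        have hR'card : R'.card = C.card - 2 := by
          rw [hR', Finset.card_erase_of_mem hd₂', Finset.card_erase_of_mem hd₁, ← heqC]
          omega
        have hR'ne : R'.Nonempty := by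
          rw [← Finset.card_pos, hR'card]; omega
        have hlt' : R'.card < C'.card := by rw [hR'card, hC'card]; omega
        have hsz' : ∀ i ∈ C', 3 ≤ n i := fun i hi => hsz i (Finset.mem_of_mem_erase hi)
        have hlem := cov_card_of_lt (z := z') hsz' hR'ne hlt'
        have hsub : cov C' z' R' ⊆ cov C z R := by
          intro v hv
          rw [mem_cov] at hv ⊢
          constructor
          · intro i hi
            have hiC' : i ∉ C' := fun h => hi (Finset.mem_of_mem_erase h)
            have hip : i ≠ p := fun h => hi (h ▸ hpC)
            rw [hv.1 i hiC', hz', Function.update_of_ne hip]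
          · intro d hd
            by_cases hdd₁ : d = d₁
            · refine ⟨p, hpC, ?_⟩
              have hpC' : p ∉ C' := Finset.notMem_erase p C
              rw [hv.1 p hpC', hz', Function.update_self, hdd₁]
            · by_cases hdd₂ : d = d₂
              · refine ⟨p, hpC, ?_⟩
                have hpC' : p ∉ C' := Finset.notMem_erase p C
                rw [hv.1 p hpC', hz', Function.update_self, hdd₂, heq]
              · have hdR' : d ∈ R' := by
                  rw [hR']
                  exact Finset.mem_erase.mpr ⟨hdd₂, Finset.mem_erase.mpr ⟨hdd₁, hd⟩⟩
                obtain ⟨i, hiC', hvi⟩ := hv.2 d hdR'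
                exact ⟨i, Finset.mem_of_mem_erase hiC', hvi⟩
        have h5 := Finset.card_le_card hsub
        rw [hC'card] at hlem
        omega
      · -- no collision: all columns have distinct values across rows
        push_neg at hcol
        have hncol : ∀ p ∈ C, ∀ d₁ ∈ R, ∀ d₂ ∈ R, d₁ p = d₂ p → d₁ = d₂ := by
          intro p hp d₁ hd₁ d₂ hd₂ hpq
          by_contra hne
          exact (hcol p hp d₁ hd₁ d₂ hd₂ hne) hpq
        let E : {x // x ∈ C} ≃ {x // x ∈ R} := Finset.equivOfCardEq heqC.symm
        let f : Equiv.Perm {x // x ∈ C} → (∀ i, ZMod (n i)) := fun π i =>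
          if h : i ∈ C then (E (π ⟨i, h⟩)).1 i else z i
        have hf_cov : ∀ π, f π ∈ cov C z R := by
          intro π
          rw [mem_cov]
          constructor
          · intro i hi
            exact dif_neg hi
          · intro d hd
            set x := π.symm (E.symm ⟨d, hd⟩) with hxdef
            refine ⟨x.1, x.2, ?_⟩
            have h1 : f π x.1 = (E (π ⟨x.1, x.2⟩)).1 x.1 := dif_pos x.2
            have h2 : (⟨x.1, x.2⟩ : {x // x ∈ C}) = x := Subtype.ext rfl
            rw [h1, h2, hxdef, Equiv.apply_symm_apply, Equiv.apply_symm_apply]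
        have hf_inj : Function.Injective f := by
          intro π π' h
          ext x
          have e1 : f π x.1 = (E (π ⟨x.1, x.2⟩)).1 x.1 := dif_pos x.2
          have e2 : f π' x.1 = (E (π' ⟨x.1, x.2⟩)).1 x.1 := dif_pos x.2
          have h2 : (⟨x.1, x.2⟩ : {x // x ∈ C}) = x := Subtype.ext rfl
          have h1 : (E (π x)).1 x.1 = (E (π' x)).1 x.1 := by
            rw [← h2]; rw [← e1, ← e2]; exact congrFun h x.1
          have h3 : (E (π x) : ∀ i, ZMod (n i)) = (E (π' x) : _) :=
            hncol x.1 x.2 _ (E (π x)).2 _ (E (π' x)).2 h1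
          have h4 : E (π x) = E (π' x) := Subtype.ext h3
          have := E.injective h4
          rw [this]
        have hsub : Finset.univ.image f ⊆ cov C z R := by
          intro a ha
          obtain ⟨π, _, rfl⟩ := Finset.mem_image.mp ha
          exact hf_cov π
        have hcard : (Finset.univ.image f).card = (C.card).factorial := by
          rw [Finset.card_image_of_injective _ hf_inj, Finset.card_univ, Fintype.card_perm,
            Fintype.card_coe]
        have hfact : C.card + 2 ≤ (C.card).factorial := by
          obtain ⟨m', hm⟩ : ∃ m', C.card = m' + 3 := ⟨C.card - 3, by omega⟩
          rw [hm]
          have h1 : m' + 2 ≤ (m' + 2).factorial := Nat.self_le_factorial _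
          have h2 : (m' + 3).factorial = (m' + 3) * (m' + 2).factorial := rfl
          have h3 : (m' + 3) * (m' + 2) ≤ (m' + 3) * (m' + 2).factorial :=
            Nat.mul_le_mul_left _ h1
          nlinarith
        have h6 := Finset.card_le_card hsub
        omega

end Cover

theorem stmt5 (t : ℕ) (ht : 4 ≤ t) (n : Fin t → ℕ) (hmono : Monotone n)
    (h1 : 2 ≤ n ⟨0, by omega⟩) (h2 : 3 ≤ n ⟨1, by omega⟩) :
    t + 1 + (t - 1) / (n ⟨0, by omega⟩ - 1) ≤ domNum (completeProd t n) := by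
  classical
  have ht0 : 0 < t := by omega
  have ht1 : 1 < t := by omega
  set i0 : Fin t := ⟨0, ht0⟩ with hi0def
  set i1 : Fin t := ⟨1, ht1⟩ with hi1def
  have h1' : 2 ≤ n i0 := h1
  have h2' : 3 ≤ n i1 := h2
  haveI hNZ : ∀ i, NeZero (n i) := fun i => ⟨by
    have := hmono (Fin.le_def.mpr (Nat.zero_le i.val) : i0 ≤ i)
    omega⟩
  show t + 1 + (t - 1) / (n i0 - 1) ≤ domNum (completeProd t n)
  apply le_csInf
  · exact ⟨(Set.univ : Set (∀ i, ZMod (n i))).ncard, Set.univ,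
      fun v => Or.inl (Set.mem_univ v), rfl⟩
  · rintro k ⟨D, hD, rfl⟩
    by_contra hlt
    push_neg at hlt
    set q := (t - 1) / (n i0 - 1) with hqdef
    have hq1 : q * (n i0 - 1) ≤ t - 1 := Nat.div_mul_le_self _ _
    have hq2 : q ≤ t - 1 := Nat.div_le_self _ _
    set Df := (Set.toFinite D).toFinset with hDfdef
    have hkcard : Df.card = D.ncard := (Set.ncard_eq_toFinset_card D (Set.toFinite D)).symm
    obtain ⟨c₀, -, hmax⟩ := Finset.exists_max_image (Finset.univ : Finset (ZMod (n i0)))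
      (fun c => (Df.filter (fun d => d i0 = c)).card) Finset.univ_nonempty
    set Dc := Df.filter (fun d => d i0 = c₀) with hDc
    set M := Dc.card with hM
    have hsum : Df.card = ∑ c : ZMod (n i0), (Df.filter (fun d => d i0 = c)).card :=
      Finset.card_eq_sum_card_fiberwise (fun d _ => Finset.mem_univ _)
    have hkM : Df.card ≤ (n i0) * M := by
      calc Df.card = ∑ c : ZMod (n i0), (Df.filter (fun d => d i0 = c)).card := hsum
      _ ≤ ∑ _c : ZMod (n i0), M := Finset.sum_le_sum (fun c hc => hmax c hc)
      _ = (n i0) * M := by rw [Finset.sum_const, smul_eq_mul, Finset.card_univ, ZMod.card]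
    clear hsum
    set R := Df \ Dc with hRdef
    have hMR : R.card + M = Df.card :=
      Finset.card_sdiff_add_card_eq_card (Finset.filter_subset _ _)
    have hrt : R.card + 1 ≤ t := by
      by_contra hcon
      push_neg at hcon
      have hMq : M ≤ q := by omega
      have e1 : (n i0 - 1) * M ≤ (n i0 - 1) * q := Nat.mul_le_mul_left _ hMq
      have e2 : (n i0 - 1) * M = n i0 * M - 1 * M := by rw [tsub_mul]
      have e3 : M ≤ n i0 * M := Nat.le_mul_of_pos_left _ (by omega)
      have e4 : (n i0 - 1) * q = q * (n i0 - 1) := Nat.mul_comm _ _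
      omega
    set C := Finset.univ.erase i0 with hC
    have hCcard : C.card = t - 1 := by
      rw [hC, Finset.card_erase_of_mem (Finset.mem_univ _), Finset.card_univ, Fintype.card_fin]
    have hsz : ∀ i ∈ C, 3 ≤ n i := by
      intro i hi
      have hne : i ≠ i0 := Finset.ne_of_mem_erase hi
      have hle : i1 ≤ i := by
        rw [Fin.le_def]
        have : i.val ≠ 0 := fun h => hne (Fin.ext h)
        simp only [hi1def]
        omega
      exact le_trans h2' (hmono hle)
    set z := Function.update (fun i => (0 : ZMod (n i))) i0 c₀ with hzdef
    have hmain := cov_card_main (C := C) (z := z) (R := R) hsz (by omega) (by omega)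
    have hsub : cov C z R ⊆ Dc := by
      intro v hv
      rw [mem_cov] at hv
      have hvi0 : v i0 = c₀ := by
        rw [hv.1 i0 (Finset.notMem_erase i0 _), hzdef, Function.update_self]
      have hvD : v ∈ D := by
        rcases hD v with h | ⟨d, hdD, hadj⟩
        · exact h
        · exfalso
          obtain ⟨hne, hall⟩ := hadj
          have hdDf : d ∈ Df := (Set.Finite.mem_toFinset _).mpr hdD
          have hdR : d ∈ R := by
            rw [hRdef, Finset.mem_sdiff]
            refine ⟨hdDf, ?_⟩
            rw [hDc, Finset.mem_filter]
            rintro ⟨-, hdc⟩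
            exact hall i0 (by rw [hvi0, hdc])
          obtain ⟨i, hiC, hvi⟩ := hv.2 d hdR
          exact hall i hvi
      rw [hDc, Finset.mem_filter]
      exact ⟨(Set.Finite.mem_toFinset _).mpr hvD, hvi0⟩
    have hcovM := Finset.card_le_card hsub
    omega
end

section
/- Let G = K_{n₁} × K_{n₂} × K_{n₃} × K_{n₄} (direct product) with 2 = n₁ ≤ n₂ ≤ n₃ ≤ n₄. Then the domination number of G equals 8. -/
section core
variable {A B C : Type*} [Fintype A] [Fintype B] [Fintype C]
  [DecidableEq A] [DecidableEq B] [DecidableEq C]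

def agr (v s : A × B × C) : Prop := v.1 = s.1 ∨ v.2.1 = s.2.1 ∨ v.2.2 = s.2.2

instance (v s : A × B × C) : Decidable (agr v s) :=
  inferInstanceAs (Decidable (_ ∨ _ ∨ _))

def USet (S : Finset (A × B × C)) : Finset (A × B × C) :=
  Finset.univ.filter (fun v => ∀ s ∈ S, agr v s)

lemma mem_USet {S : Finset (A × B × C)} {v : A × B × C} :
    v ∈ USet S ↔ ∀ s ∈ S, agr v s := by
  simp [USet]

lemma triple_eq {p q : A × B × C} (ha : p.1 = q.1) (hb : p.2.1 = q.2.1)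
    (hc : p.2.2 = q.2.2) : p = q := by
  obtain ⟨a, b, c⟩ := p; obtain ⟨a', b', c'⟩ := q; simp_all

lemma points_le {S : Finset (A × B × C)} (l : List (A × B × C))
    (hnd : l.Nodup) (h : ∀ p ∈ l, p ∈ USet S) : l.length ≤ (USet S).card := by
  classical
  have hsub : l.toFinset ⊆ USet S := fun p hp => h p (List.mem_toFinset.mp hp)
  have := Finset.card_le_card hsub
  rwa [List.toFinset_card_of_nodup hnd] at this

lemma U_card_transfer {A' B' C' : Type*} [Fintype A'] [Fintype B'] [Fintype C']
    [DecidableEq A'] [DecidableEq B'] [DecidableEq C']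
    (f : A × B × C → A' × B' × C') (g : A' × B' × C' → A × B × C)
    (hgf : ∀ p, g (f p) = p) (hfg : ∀ p, f (g p) = p)
    (hrel : ∀ v s, agr (f v) (f s) ↔ agr v s)
    (S : Finset (A × B × C)) :
    (USet S).card = (USet (S.image f)).card := by
  have hinj : Function.Injective f := fun p q h => by rw [← hgf p, ← hgf q, h]
  have himg : USet (S.image f) = (USet S).image f := by
    ext v'
    simp only [mem_USet, Finset.mem_image]
    constructor
    · intro h
      refine ⟨g v', fun s hs => ?_, hfg v'⟩
      have := h (f s) ⟨s, hs, rfl⟩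
      rw [← hfg v'] at this
      exact (hrel _ _).mp this
    · rintro ⟨v, hv, rfl⟩ s' hs'
      obtain ⟨s, hs, rfl⟩ := hs'
      exact (hrel v s).mpr (hv s hs)
  rw [himg, Finset.card_image_of_injective _ hinj]

lemma swap12_inj : Function.Injective (fun p : A × B × C => ((p.2.1, p.1, p.2.2) : B × A × C)) := by
  intro p q h
  simp only [Prod.mk.injEq] at h
  exact triple_eq h.2.1 h.1 h.2.2

lemma swap13_inj : Function.Injective (fun p : A × B × C => ((p.2.2, p.2.1, p.1) : C × B × A)) := by
  intro p q h
  simp only [Prod.mk.injEq] at h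
  exact triple_eq h.2.2 h.2.1 h.1

variable (hA : 2 ≤ Fintype.card A) (hB : 2 ≤ Fintype.card B) (hC : 2 ≤ Fintype.card C)

include hA hB hC in
lemma core0 : 8 ≤ (USet (∅ : Finset (A × B × C))).card := by
  have : USet (∅ : Finset (A × B × C)) = Finset.univ := by
    ext v; simp [mem_USet]
  rw [this, Finset.card_univ]
  calc (8:ℕ) = 2 * (2 * 2) := by norm_num
  _ ≤ _ := by
      rw [Fintype.card_prod, Fintype.card_prod]
      exact Nat.mul_le_mul hA (Nat.mul_le_mul hB hC)

include hA hB hC in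
lemma core1 (s : A × B × C) : 7 ≤ (USet ({s} : Finset (A × B × C))).card := by
  obtain ⟨a', ha'⟩ := Fintype.exists_ne_of_one_lt_card hA s.1
  obtain ⟨b', hb'⟩ := Fintype.exists_ne_of_one_lt_card hB s.2.1
  obtain ⟨b0, b1, hb01⟩ := Fintype.exists_pair_of_one_lt_card hB
  obtain ⟨c0, c1, hc01⟩ := Fintype.exists_pair_of_one_lt_card hC
  have := points_le (S := ({s} : Finset (A × B × C)))
    [(s.1,b0,c0),(s.1,b0,c1),(s.1,b1,c0),(s.1,b1,c1),(a',s.2.1,c0),(a',s.2.1,c1),(a',b',s.2.2)]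
    (by simp [List.nodup_cons, Prod.ext_iff]; tauto)
    (by intro p hp; fin_cases hp <;> simp [mem_USet, agr])
  simpa using this

include hA hB hC in
lemma core2_share (s t : A × B × C) (hst : s ≠ t) (h1 : s.1 = t.1) :
    6 ≤ (USet ({s, t} : Finset (A × B × C))).card := by
  obtain ⟨a', ha'⟩ := Fintype.exists_ne_of_one_lt_card hA s.1
  obtain ⟨b0, b1, hb01⟩ := Fintype.exists_pair_of_one_lt_card hB
  obtain ⟨c0, c1, hc01⟩ := Fintype.exists_pair_of_one_lt_card hC
  by_cases h2 : s.2.1 = t.2.1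
  · have := points_le (S := ({s, t} : Finset (A × B × C)))
      [(s.1,b0,c0),(s.1,b0,c1),(s.1,b1,c0),(s.1,b1,c1),(a',s.2.1,c0),(a',s.2.1,c1)]
      (by simp [List.nodup_cons, Prod.ext_iff]; tauto)
      (by intro p hp; fin_cases hp <;> simp [mem_USet, agr, h1, h2] <;> tauto)
    simpa using this
  · by_cases h3 : s.2.2 = t.2.2
    · have := points_le (S := ({s, t} : Finset (A × B × C)))
        [(s.1,b0,c0),(s.1,b0,c1),(s.1,b1,c0),(s.1,b1,c1),(a',b0,s.2.2),(a',b1,s.2.2)]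
        (by simp [List.nodup_cons, Prod.ext_iff]; tauto)
        (by intro p hp; fin_cases hp <;> simp [mem_USet, agr, h1, h3] <;> tauto)
      simpa using this
    · have := points_le (S := ({s, t} : Finset (A × B × C)))
        [(s.1,b0,c0),(s.1,b0,c1),(s.1,b1,c0),(s.1,b1,c1),(a',s.2.1,t.2.2),(a',t.2.1,s.2.2)]
        (by simp [List.nodup_cons, Prod.ext_iff]; tauto)
        (by intro p hp; fin_cases hp <;> simp [mem_USet, agr, h1] <;> tauto)
      simpa using this

include hA hB hC in
lemma core2_gen (s t : A × B × C) (h1 : s.1 ≠ t.1) (h2 : s.2.1 ≠ t.2.1)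
    (h3 : s.2.2 ≠ t.2.2) :
    6 ≤ (USet ({s, t} : Finset (A × B × C))).card := by
  obtain ⟨a', ha'⟩ := Fintype.exists_ne_of_one_lt_card hA s.1
  obtain ⟨b', hb'⟩ := Fintype.exists_ne_of_one_lt_card hB t.2.1
  obtain ⟨b'', hb''⟩ := Fintype.exists_ne_of_one_lt_card hB s.2.1
  obtain ⟨c'', hc''⟩ := Fintype.exists_ne_of_one_lt_card hC t.2.2
  obtain ⟨c0, c1, hc01⟩ := Fintype.exists_pair_of_one_lt_card hC
  have := points_le (S := ({s, t} : Finset (A × B × C)))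
    [(s.1,t.2.1,c0),(s.1,t.2.1,c1),(s.1,b',t.2.2),(a',s.2.1,t.2.2),(t.1,s.2.1,c''),(t.1,b'',s.2.2)]
    (by simp [List.nodup_cons, Prod.ext_iff]; tauto)
    (by intro p hp; fin_cases hp <;> simp [mem_USet, agr] <;> tauto)
  simpa using this

include hA hB hC in
lemma core2 (s t : A × B × C) (hst : s ≠ t) :
    6 ≤ (USet ({s, t} : Finset (A × B × C))).card := by
  by_cases h1 : s.1 = t.1
  · exact core2_share hA hB hC s t hst h1
  by_cases h2 : s.2.1 = t.2.1
  · rw [U_card_transfer (fun p => (p.2.1, p.1, p.2.2)) (fun p => (p.2.1, p.1, p.2.2))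
      (fun p => rfl) (fun p => rfl) (fun v s => by unfold agr; dsimp only; tauto)]
    rw [show (({s, t} : Finset (A × B × C)).image (fun p => (p.2.1, p.1, p.2.2)))
        = {(s.2.1, s.1, s.2.2), (t.2.1, t.1, t.2.2)} by simp]
    exact core2_share hB hA hC _ _
      (fun h => hst (swap12_inj h)) h2
  by_cases h3 : s.2.2 = t.2.2
  · rw [U_card_transfer (fun p => (p.2.2, p.2.1, p.1)) (fun p => (p.2.2, p.2.1, p.1))
      (fun p => rfl) (fun p => rfl) (fun v s => by unfold agr; dsimp only; tauto)]
    rw [show (({s, t} : Finset (A × B × C)).image (fun p => (p.2.2, p.2.1, p.1)))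
        = {(s.2.2, s.2.1, s.1), (t.2.2, t.2.1, t.1)} by simp]
    exact core2_share hC hB hA _ _
      (fun h => hst (swap13_inj h)) h3
  · exact core2_gen hA hB hC s t h1 h2 h3

include hA hB hC in
lemma core3_share (s t u : A × B × C) (hst : s ≠ t) (hsu : s ≠ u) (htu : t ≠ u)
    (h1 : s.1 = t.1) :
    5 ≤ (USet ({s, t, u} : Finset (A × B × C))).card := by
  obtain ⟨a', ha'⟩ := Fintype.exists_ne_of_one_lt_card hA s.1
  obtain ⟨b0, b1, hb01⟩ := Fintype.exists_pair_of_one_lt_card hB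
  obtain ⟨c0, c1, hc01⟩ := Fintype.exists_pair_of_one_lt_card hC
  by_cases hu1 : u.1 = s.1
  · -- all three share the first coordinate
    by_cases e1 : s.2.1 = t.2.1
    · have := points_le (S := ({s, t, u} : Finset (A × B × C)))
        [(s.1,b0,c0),(s.1,b0,c1),(s.1,b1,c0),(s.1,b1,c1),(a',s.2.1,u.2.2)]
        (by simp [List.nodup_cons, Prod.ext_iff]; tauto)
        (by intro p hp; fin_cases hp <;> simp [mem_USet, agr, h1, hu1, e1] <;> tauto)
      simpa using this
    by_cases e2 : s.2.1 = u.2.1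
    · have := points_le (S := ({s, t, u} : Finset (A × B × C)))
        [(s.1,b0,c0),(s.1,b0,c1),(s.1,b1,c0),(s.1,b1,c1),(a',s.2.1,t.2.2)]
        (by simp [List.nodup_cons, Prod.ext_iff]; tauto)
        (by intro p hp; fin_cases hp <;> simp [mem_USet, agr, h1, hu1, e2] <;> tauto)
      simpa using this
    by_cases e3 : t.2.1 = u.2.1
    · have := points_le (S := ({s, t, u} : Finset (A × B × C)))
        [(s.1,b0,c0),(s.1,b0,c1),(s.1,b1,c0),(s.1,b1,c1),(a',t.2.1,s.2.2)]
        (by simp [List.nodup_cons, Prod.ext_iff]; tauto)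
        (by intro p hp; fin_cases hp <;> simp [mem_USet, agr, h1, hu1, e3] <;> tauto)
      simpa using this
    · -- s.2.1, t.2.1, u.2.1 pairwise distinct
      have := points_le (S := ({s, t, u} : Finset (A × B × C)))
        [(s.1,s.2.1,c0),(s.1,s.2.1,c1),(s.1,t.2.1,c0),(s.1,t.2.1,c1),(s.1,u.2.1,c0)]
        (by simp [List.nodup_cons, Prod.ext_iff]; tauto)
        (by intro p hp; fin_cases hp <;> simp [mem_USet, agr, h1, hu1] <;> tauto)
      simpa using this
  · -- u differs from s, t in the first coordinate
    obtain ⟨b', hb'⟩ := Fintype.exists_ne_of_one_lt_card hB u.2.1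
    have hst23 : s.2.1 ≠ t.2.1 ∨ s.2.2 ≠ t.2.2 := by
      by_contra h
      push_neg at h
      exact hst (triple_eq h1 h.1 h.2)
    have := points_le (S := ({s, t, u} : Finset (A × B × C)))
      [(s.1,u.2.1,c0),(s.1,u.2.1,c1),(s.1,b',u.2.2),(u.1,s.2.1,t.2.2),(u.1,t.2.1,s.2.2)]
      (by simp [List.nodup_cons, Prod.ext_iff]; tauto)
      (by intro p hp; fin_cases hp <;> simp [mem_USet, agr, h1] <;> tauto)
    simpa using this

include hA hB hC in
lemma core3_gen (s t u : A × B × C)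
    (a1 : s.1 ≠ t.1) (a2 : s.1 ≠ u.1) (a3 : t.1 ≠ u.1)
    (b1 : s.2.1 ≠ t.2.1) (b2 : s.2.1 ≠ u.2.1) (b3 : t.2.1 ≠ u.2.1)
    (c1 : s.2.2 ≠ t.2.2) (c2 : s.2.2 ≠ u.2.2) (c3 : t.2.2 ≠ u.2.2) :
    5 ≤ (USet ({s, t, u} : Finset (A × B × C))).card := by
  have := points_le (S := ({s, t, u} : Finset (A × B × C)))
    [(s.1,t.2.1,u.2.2),(s.1,u.2.1,t.2.2),(t.1,s.2.1,u.2.2),(t.1,u.2.1,s.2.2),(u.1,s.2.1,t.2.2)]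
    (by simp [List.nodup_cons, Prod.ext_iff]; tauto)
    (by intro p hp; fin_cases hp <;> simp [mem_USet, agr] <;> tauto)
  simpa using this


include hA hB hC in
lemma core3 (s t u : A × B × C) (hst : s ≠ t) (hsu : s ≠ u) (htu : t ≠ u) :
    5 ≤ (USet ({s, t, u} : Finset (A × B × C))).card := by
  have eq1 : ({s, u, t} : Finset (A × B × C)) = {s, t, u} := by
    ext x; simp [Finset.mem_insert]; tauto
  have eq2 : ({t, u, s} : Finset (A × B × C)) = {s, t, u} := by
    ext x; simp [Finset.mem_insert]; tauto
  by_cases h1 : s.1 = t.1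
  · exact core3_share hA hB hC s t u hst hsu htu h1
  by_cases h2 : s.1 = u.1
  · rw [← eq1]; exact core3_share hA hB hC s u t hsu hst (Ne.symm htu) h2
  by_cases h3 : t.1 = u.1
  · rw [← eq2]; exact core3_share hA hB hC t u s htu (Ne.symm hst) (Ne.symm hsu) h3
  by_cases h4 : s.2.1 = t.2.1
  · rw [U_card_transfer (fun p => (p.2.1, p.1, p.2.2)) (fun p => (p.2.1, p.1, p.2.2))
      (fun p => rfl) (fun p => rfl) (fun v s => by unfold agr; dsimp only; tauto)]
    rw [show (({s, t, u} : Finset (A × B × C)).image (fun p => (p.2.1, p.1, p.2.2)))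
        = {(s.2.1, s.1, s.2.2), (t.2.1, t.1, t.2.2), (u.2.1, u.1, u.2.2)} by simp]
    exact core3_share hB hA hC _ _ _
      (fun h => hst (swap12_inj h)) (fun h => hsu (swap12_inj h))
      (fun h => htu (swap12_inj h)) h4
  by_cases h5 : s.2.1 = u.2.1
  · rw [U_card_transfer (fun p => (p.2.1, p.1, p.2.2)) (fun p => (p.2.1, p.1, p.2.2))
      (fun p => rfl) (fun p => rfl) (fun v s => by unfold agr; dsimp only; tauto)]
    rw [show (({s, t, u} : Finset (A × B × C)).image (fun p => (p.2.1, p.1, p.2.2)))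
        = {(s.2.1, s.1, s.2.2), (u.2.1, u.1, u.2.2), (t.2.1, t.1, t.2.2)} by
          simp only [Finset.image_insert, Finset.image_singleton]
          ext x; simp [Finset.mem_insert]; tauto]
    exact core3_share hB hA hC _ _ _
      (fun h => hsu (swap12_inj h)) (fun h => hst (swap12_inj h))
      (fun h => htu (swap12_inj h).symm) h5
  by_cases h6 : t.2.1 = u.2.1
  · rw [U_card_transfer (fun p => (p.2.1, p.1, p.2.2)) (fun p => (p.2.1, p.1, p.2.2))
      (fun p => rfl) (fun p => rfl) (fun v s => by unfold agr; dsimp only; tauto)]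
    rw [show (({s, t, u} : Finset (A × B × C)).image (fun p => (p.2.1, p.1, p.2.2)))
        = {(t.2.1, t.1, t.2.2), (u.2.1, u.1, u.2.2), (s.2.1, s.1, s.2.2)} by
          simp only [Finset.image_insert, Finset.image_singleton]
          ext x; simp [Finset.mem_insert]; tauto]
    exact core3_share hB hA hC _ _ _
      (fun h => htu (swap12_inj h)) (fun h => hst (swap12_inj h).symm)
      (fun h => hsu (swap12_inj h).symm) h6
  by_cases h7 : s.2.2 = t.2.2
  · rw [U_card_transfer (fun p => (p.2.2, p.2.1, p.1)) (fun p => (p.2.2, p.2.1, p.1))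
      (fun p => rfl) (fun p => rfl) (fun v s => by unfold agr; dsimp only; tauto)]
    rw [show (({s, t, u} : Finset (A × B × C)).image (fun p => (p.2.2, p.2.1, p.1)))
        = {(s.2.2, s.2.1, s.1), (t.2.2, t.2.1, t.1), (u.2.2, u.2.1, u.1)} by simp]
    exact core3_share hC hB hA _ _ _
      (fun h => hst (swap13_inj h)) (fun h => hsu (swap13_inj h))
      (fun h => htu (swap13_inj h)) h7
  by_cases h8 : s.2.2 = u.2.2
  · rw [U_card_transfer (fun p => (p.2.2, p.2.1, p.1)) (fun p => (p.2.2, p.2.1, p.1))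
      (fun p => rfl) (fun p => rfl) (fun v s => by unfold agr; dsimp only; tauto)]
    rw [show (({s, t, u} : Finset (A × B × C)).image (fun p => (p.2.2, p.2.1, p.1)))
        = {(s.2.2, s.2.1, s.1), (u.2.2, u.2.1, u.1), (t.2.2, t.2.1, t.1)} by
          simp only [Finset.image_insert, Finset.image_singleton]
          ext x; simp [Finset.mem_insert]; tauto]
    exact core3_share hC hB hA _ _ _
      (fun h => hsu (swap13_inj h)) (fun h => hst (swap13_inj h))
      (fun h => htu (swap13_inj h).symm) h8
  by_cases h9 : t.2.2 = u.2.2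
  · rw [U_card_transfer (fun p => (p.2.2, p.2.1, p.1)) (fun p => (p.2.2, p.2.1, p.1))
      (fun p => rfl) (fun p => rfl) (fun v s => by unfold agr; dsimp only; tauto)]
    rw [show (({s, t, u} : Finset (A × B × C)).image (fun p => (p.2.2, p.2.1, p.1)))
        = {(t.2.2, t.2.1, t.1), (u.2.2, u.2.1, u.1), (s.2.2, s.2.1, s.1)} by
          simp only [Finset.image_insert, Finset.image_singleton]
          ext x; simp [Finset.mem_insert]; tauto]
    exact core3_share hC hB hA _ _ _
      (fun h => htu (swap13_inj h)) (fun h => hst (swap13_inj h).symm)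
      (fun h => hsu (swap13_inj h).symm) h9
  · exact core3_gen hA hB hC s t u h1 h2 h3 h4 h5 h6 h7 h8 h9

include hA hB hC in
lemma coreMain (S : Finset (A × B × C)) (hS : S.card ≤ 3) :
    8 ≤ S.card + (USet S).card := by
  have h4 : S.card = 0 ∨ S.card = 1 ∨ S.card = 2 ∨ S.card = 3 := by omega
  rcases h4 with h | h | h | h
  · rw [h, Finset.card_eq_zero.mp h]
    calc (8:ℕ) = 0 + 8 := rfl
    _ ≤ _ := Nat.add_le_add_left (core0 hA hB hC) 0
  · obtain ⟨s, rfl⟩ := Finset.card_eq_one.mp h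
    rw [h]
    calc (8:ℕ) = 1 + 7 := rfl
    _ ≤ _ := Nat.add_le_add_left (core1 hA hB hC s) 1
  · obtain ⟨s, t, hst, rfl⟩ := Finset.card_eq_two.mp h
    rw [h]
    calc (8:ℕ) = 2 + 6 := rfl
    _ ≤ _ := Nat.add_le_add_left (core2 hA hB hC s t hst) 2
  · obtain ⟨s, t, u, hst, hsu, htu, rfl⟩ := Finset.card_eq_three.mp h
    rw [h]
    calc (8:ℕ) = 3 + 5 := rfl
    _ ≤ _ := Nat.add_le_add_left (core3 hA hB hC s t u hst hsu htu) 3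

end core



lemma zmod_zero_ne_one {m : ℕ} (hm : 2 ≤ m) : (0 : ZMod m) ≠ 1 := by
  haveI : NeZero m := ⟨by omega⟩
  haveI : Fact (1 < m) := ⟨by omega⟩
  intro h
  have := congrArg ZMod.val h
  rw [ZMod.val_zero, ZMod.val_one] at this
  exact absurd this (by omega)

lemma zmod_two_cases {m : ℕ} (hm : m = 2) (x : ZMod m) : x = 0 ∨ x = 1 := by
  subst hm; revert x; decide

def Fvert (n : Fin 4 → ℕ) (ε a b : Bool) : ∀ i : Fin 4, ZMod (n i) :=
  fun i => (cond (![ε, a, b, xor a b] i) 1 0 : ZMod (n i))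

example (n : Fin 4 → ℕ) (ε a b : Bool) : Fvert n ε a b 1 = cond a 1 0 := rfl
example (n : Fin 4 → ℕ) (ε a b : Bool) : Fvert n ε a b 3 = cond (xor a b) 1 0 := rfl

def xvert (n : Fin 4 → ℕ) (ε : ZMod (n 0))
    (v : ZMod (n 1) × ZMod (n 2) × ZMod (n 3)) : ∀ i : Fin 4, ZMod (n i) :=
  Fin.cons ε (Fin.cons v.1 (Fin.cons v.2.1 (Fin.cons v.2.2 finZeroElim)))

example (n : Fin 4 → ℕ) (ε : ZMod (n 0)) v : xvert n ε v 0 = ε := rfl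
example (n : Fin 4 → ℕ) (ε : ZMod (n 0)) v : xvert n ε v 1 = v.1 := rfl
example (n : Fin 4 → ℕ) (ε : ZMod (n 0)) v : xvert n ε v 2 = v.2.1 := rfl
example (n : Fin 4 → ℕ) (ε : ZMod (n 0)) v : xvert n ε v 3 = v.2.2 := rfl

lemma bit_ne {m : ℕ} (hm : 2 ≤ m) (x : ZMod m) :
    (cond (decide (x = 0)) 1 0 : ZMod m) ≠ x := by
  by_cases h : x = 0
  · simp [h]
    exact fun he => zmod_zero_ne_one hm he.symm
  · simp [h]
    exact fun he => h he.symm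

lemma bit_inj {m : ℕ} (hm : 2 ≤ m) {x y : Bool}
    (h : (cond x 1 0 : ZMod m) = cond y 1 0) : x = y := by
  cases x <;> cases y <;> simp_all <;>
    [exact zmod_zero_ne_one hm h; exact zmod_zero_ne_one hm h.symm]

def alph {m : ℕ} (x : ZMod m) : Option Bool :=
  if x = 0 then some false else if x = 1 then some true else none

lemma helper_dec : ∀ t1 t2 t3 : Option Bool,
    (∃ a b : Bool, t1 ≠ some a ∧ t2 ≠ some b ∧ t3 ≠ some (xor a b)) ∨
    (∃ a b : Bool, t1 = some a ∧ t2 = some b ∧ t3 = some (xor a b)) := by decide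

lemma alph_ne {m : ℕ} (hm : 2 ≤ m) {x : ZMod m} {a : Bool}
    (h : alph x ≠ some a) : (cond a 1 0 : ZMod m) ≠ x := by
  have h01 := zmod_zero_ne_one hm
  unfold alph at h
  by_cases h0 : x = 0
  · subst h0
    cases a
    · simp at h
    · simpa using fun he => h01 he.symm
  · by_cases h1 : x = 1
    · subst h1
      cases a
      · simpa using fun he => h01 he
      · rw [if_neg h0, if_pos rfl] at h
        simp at h
    · cases a
      · simpa using fun he => h0 he.symm
      · simpa using fun he => h1 he.symm

lemma alph_eq {m : ℕ} {x : ZMod m} {a : Bool}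
    (h : alph x = some a) : x = cond a 1 0 := by
  unfold alph at h
  by_cases h0 : x = 0
  · rw [if_pos h0] at h
    injection h with h'
    subst h'
    simpa using h0
  · by_cases h1 : x = 1
    · rw [if_neg h0, if_pos h1] at h
      injection h with h'
      subst h'
      simpa using h1
    · rw [if_neg h0, if_neg h1] at h
      exact absurd h (by simp)


set_option maxHeartbeats 1000000 in
lemma lowerBound (n : Fin 4 → ℕ) (hmono : Monotone n) (h0 : n 0 = 2)
    (D : Set (∀ i, ZMod (n i))) (hdom : IsDomSet (completeProd 4 n) D) :
    8 ≤ D.ncard := by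
  classical
  have hn : ∀ i, 2 ≤ n i := by
    intro i
    have h2 := hmono (Fin.zero_le i)
    omega
  haveI hnz : ∀ i, NeZero (n i) := fun i => ⟨by have := hn i; omega⟩
  haveI hfty : ∀ i, Fintype (ZMod (n i)) := fun i => ZMod.fintype _
  have hfin : D.Finite := Set.toFinite D
  rw [Set.ncard_eq_toFinset_card D hfin]
  have hDF : ∀ x, x ∈ hfin.toFinset ↔ x ∈ D := fun x => Set.Finite.mem_toFinset hfin
  have c2a : 2 ≤ Fintype.card (ZMod (n 1)) := by rw [ZMod.card]; exact hn 1
  have c2b : 2 ≤ Fintype.card (ZMod (n 2)) := by rw [ZMod.card]; exact hn 2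
  have c2c : 2 ≤ Fintype.card (ZMod (n 3)) := by rw [ZMod.card]; exact hn 3
  have key : ∀ ε δ : ZMod (n 0), (∀ x : ZMod (n 0), x = ε ∨ x = δ) →
      USet ((hfin.toFinset.filter (fun x => x 0 = δ)).image (fun x => (x 1, x 2, x 3))) ⊆
        (hfin.toFinset.filter (fun x => x 0 = ε)).image (fun x => (x 1, x 2, x 3)) := by
    intro ε δ hcov v hv
    rcases hdom (xvert n ε v) with hx | ⟨d, hd, hadj⟩
    · refine Finset.mem_image.mpr ⟨xvert n ε v, ?_, rfl⟩
      exact Finset.mem_filter.mpr ⟨(hDF _).mpr hx, rfl⟩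
    · obtain ⟨hvd, hall⟩ := hadj
      have h0d : d 0 = δ := by
        rcases hcov (d 0) with h | h
        · exact absurd h (Ne.symm (hall 0))
        · exact h
      have hdS : (d 1, d 2, d 3) ∈
          (hfin.toFinset.filter (fun x => x 0 = δ)).image (fun x => (x 1, x 2, x 3)) :=
        Finset.mem_image_of_mem _ (Finset.mem_filter.mpr ⟨(hDF d).mpr hd, h0d⟩)
      have hagr := mem_USet.mp hv (d 1, d 2, d 3) hdS
      rcases (show v.1 = d 1 ∨ v.2.1 = d 2 ∨ v.2.2 = d 3 from hagr) with h | h | h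
      · exact absurd h (hall 1)
      · exact absurd h (hall 2)
      · exact absurd h (hall 3)
  have h01 : (0 : ZMod (n 0)) ≠ 1 := zmod_zero_ne_one (hn 0)
  have hcov : ∀ x : ZMod (n 0), x = 0 ∨ x = 1 := zmod_two_cases h0
  have hkey0 := key 0 1 hcov
  have hkey1 := key 1 0 (fun x => (hcov x).symm)
  have hsplit : (hfin.toFinset.filter (fun x => x 0 = (0 : ZMod (n 0)))).card +
      (hfin.toFinset.filter (fun x => x 0 = (1 : ZMod (n 0)))).card = hfin.toFinset.card := by
    have heq : hfin.toFinset.filter (fun x => x 0 = (1 : ZMod (n 0)))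
        = hfin.toFinset.filter (fun x => ¬ x 0 = (0 : ZMod (n 0))) := by
      apply Finset.filter_congr
      intro x _
      constructor
      · intro h
        rw [h]
        exact fun he => h01 he.symm
      · intro h
        rcases hcov (x 0) with h' | h'
        · exact absurd h' h
        · exact h'
    rw [heq, Finset.card_filter_add_card_filter_not]
  have hb0 : (USet ((hfin.toFinset.filter (fun x => x 0 = (1 : ZMod (n 0)))).image
      (fun x => (x 1, x 2, x 3)))).card ≤
      (hfin.toFinset.filter (fun x => x 0 = (0 : ZMod (n 0)))).card :=
    le_trans (Finset.card_le_card hkey0) Finset.card_image_le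
  have hb1 : (USet ((hfin.toFinset.filter (fun x => x 0 = (0 : ZMod (n 0)))).image
      (fun x => (x 1, x 2, x 3)))).card ≤
      (hfin.toFinset.filter (fun x => x 0 = (1 : ZMod (n 0)))).card :=
    le_trans (Finset.card_le_card hkey1) Finset.card_image_le
  have hs0 : ((hfin.toFinset.filter (fun x => x 0 = (0 : ZMod (n 0)))).image
      (fun x => (x 1, x 2, x 3))).card ≤
      (hfin.toFinset.filter (fun x => x 0 = (0 : ZMod (n 0)))).card := Finset.card_image_le
  have hs1 : ((hfin.toFinset.filter (fun x => x 0 = (1 : ZMod (n 0)))).image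
      (fun x => (x 1, x 2, x 3))).card ≤
      (hfin.toFinset.filter (fun x => x 0 = (1 : ZMod (n 0)))).card := Finset.card_image_le
  rcases le_or_gt ((hfin.toFinset.filter (fun x => x 0 = (1 : ZMod (n 0)))).image
      (fun x : ∀ i, ZMod (n i) => (x 1, x 2, x 3))).card 3 with hc | hc
  · have e1 := coreMain c2a c2b c2c
      ((hfin.toFinset.filter (fun x => x 0 = (1 : ZMod (n 0)))).image
        (fun x : ∀ i, ZMod (n i) => (x 1, x 2, x 3))) hc
    have e2 := Nat.add_le_add hs1 hb0
    have e3 : (hfin.toFinset.filter (fun x => x 0 = (1 : ZMod (n 0)))).card +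
        (hfin.toFinset.filter (fun x => x 0 = (0 : ZMod (n 0)))).card
        = hfin.toFinset.card := by rw [Nat.add_comm]; exact hsplit
    exact e3 ▸ (le_trans e1 e2)
  · rcases le_or_gt ((hfin.toFinset.filter (fun x => x 0 = (0 : ZMod (n 0)))).image
        (fun x : ∀ i, ZMod (n i) => (x 1, x 2, x 3))).card 3 with hc' | hc'
    · have e1 := coreMain c2a c2b c2c
        ((hfin.toFinset.filter (fun x => x 0 = (0 : ZMod (n 0)))).image
          (fun x : ∀ i, ZMod (n i) => (x 1, x 2, x 3))) hc'
      have e2 := Nat.add_le_add hs0 hb1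
      exact hsplit ▸ (le_trans e1 e2)
    · have f0 : 4 ≤ (hfin.toFinset.filter (fun x => x 0 = (0 : ZMod (n 0)))).card :=
        le_trans hc' hs0
      have f1 : 4 ≤ (hfin.toFinset.filter (fun x => x 0 = (1 : ZMod (n 0)))).card :=
        le_trans hc hs1
      have e2 : (8:ℕ) ≤ _ + _ := le_trans (by norm_num) (Nat.add_le_add f0 f1)
      exact hsplit ▸ e2

theorem stmt6 (n : Fin 4 → ℕ) (hmono : Monotone n) (h0 : n 0 = 2) :
    domNum (completeProd 4 n) = 8 := by
  classical
  have hn : ∀ i, 2 ≤ n i := by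
    intro i
    have h2 := hmono (Fin.zero_le i)
    omega
  haveI hnz : ∀ i, NeZero (n i) := fun i => ⟨by have := hn i; omega⟩
  haveI hfty : ∀ i, Fintype (ZMod (n i)) := fun i => ZMod.fintype _
  have hmem8 : 8 ∈ {k | ∃ D : Set (∀ i, ZMod (n i)),
      IsDomSet (completeProd 4 n) D ∧ D.ncard = k} := by
    refine ⟨Set.range (fun p : Bool × Bool × Bool => Fvert n p.1 p.2.1 p.2.2), ?_, ?_⟩
    · intro v
      rcases helper_dec (alph (v 1)) (alph (v 2)) (alph (v 3)) with
        ⟨a, b, h1, h2, h3⟩ | ⟨a, b, h1, h2, h3⟩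
      · right
        refine ⟨Fvert n (decide (v 0 = 0)) a b, ⟨(decide (v 0 = 0), a, b), rfl⟩, ?_⟩
        have hd0 : Fvert n (decide (v 0 = 0)) a b 0 ≠ v 0 := bit_ne (hn 0) (v 0)
        have hd1 : Fvert n (decide (v 0 = 0)) a b 1 ≠ v 1 := alph_ne (hn 1) h1
        have hd2 : Fvert n (decide (v 0 = 0)) a b 2 ≠ v 2 := alph_ne (hn 2) h2
        have hd3 : Fvert n (decide (v 0 = 0)) a b 3 ≠ v 3 := alph_ne (hn 3) h3
        refine ⟨fun he => hd0 (congrFun he 0).symm, fun i => ?_⟩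
        fin_cases i
        · exact hd0.symm
        · exact hd1.symm
        · exact hd2.symm
        · exact hd3.symm
      · left
        rcases zmod_two_cases h0 (v 0) with he | he
        · refine ⟨(false, a, b), (funext fun i => ?_)⟩
          fin_cases i
          · exact he.symm
          · exact (alph_eq h1).symm
          · exact (alph_eq h2).symm
          · exact (alph_eq h3).symm
        · refine ⟨(true, a, b), (funext fun i => ?_)⟩
          fin_cases i
          · exact he.symm
          · exact (alph_eq h1).symm
          · exact (alph_eq h2).symm
          · exact (alph_eq h3).symm
    · have hinj : Function.Injective
          (fun p : Bool × Bool × Bool => Fvert n p.1 p.2.1 p.2.2) := by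
        intro p q h
        have e0 := congrFun h 0
        have e1 := congrFun h 1
        have e2 := congrFun h 2
        exact triple_eq (bit_inj (hn 0) e0) (bit_inj (hn 1) e1) (bit_inj (hn 2) e2)
      rw [← Set.image_univ, Set.ncard_image_of_injective _ hinj, Set.ncard_univ,
        Nat.card_eq_fintype_card]
      simp
  have hlow : ∀ k ∈ {k | ∃ D : Set (∀ i, ZMod (n i)),
      IsDomSet (completeProd 4 n) D ∧ D.ncard = k}, 8 ≤ k := by
    rintro k ⟨D, hdomD, rfl⟩
    exact lowerBound n hmono h0 D hdomD
  unfold domNum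
  exact le_antisymm (Nat.sInf_le hmem8) (le_csInf ⟨8, hmem8⟩ hlow)
end

section
/- For every integer n = 6·p₁·p₂ where p₁ < p₂ are primes with 5 ≤ p₁, we have g(n) ≥ 10, where g is Jacobsthal's function. Consequently (since γ(X_n) = 8), the domination number of X_n is strictly less than g(n). -/
private lemma diag3 {α β : Type*} (a c1 c2 c3 : α) (b e1 e2 e3 : β)
    (h12 : c1 ≠ c2) (h13 : c1 ≠ c3) (h23 : c2 ≠ c3)
    (g12 : e1 ≠ e2) (g13 : e1 ≠ e3) (g23 : e2 ≠ e3) :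
    (a ≠ c1 ∧ b ≠ e1) ∨ (a ≠ c2 ∧ b ≠ e2) ∨ (a ≠ c3 ∧ b ≠ e3) := by
  by_cases h1 : a = c1
  · by_cases h2 : b = e2
    · exact Or.inr (Or.inr ⟨h1 ▸ h13, h2 ▸ g23⟩)
    · exact Or.inr (Or.inl ⟨h1 ▸ h12, h2⟩)
  · by_cases h2 : b = e1
    · by_cases h3 : a = c2
      · exact Or.inr (Or.inr ⟨h3 ▸ h23, h2 ▸ g13⟩)
      · exact Or.inr (Or.inl ⟨h3, h2 ▸ g12⟩)
    · exact Or.inl ⟨h1, h2⟩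

/-- The residue map. -/
private def psi (p₁ p₂ : ℕ) (x : ZMod (6 * p₁ * p₂)) :
    ZMod 2 × ZMod 3 × ZMod p₁ × ZMod p₂ :=
  (ZMod.castHom (show (2:ℕ) ∣ 6 * p₁ * p₂ from ⟨3 * p₁ * p₂, by ring⟩) (ZMod 2) x,
   ZMod.castHom (show (3:ℕ) ∣ 6 * p₁ * p₂ from ⟨2 * p₁ * p₂, by ring⟩) (ZMod 3) x,
   ZMod.castHom (show p₁ ∣ 6 * p₁ * p₂ from ⟨6 * p₂, by ring⟩) (ZMod p₁) x,
   ZMod.castHom (show p₂ ∣ 6 * p₁ * p₂ from ⟨6 * p₁, by ring⟩) (ZMod p₂) x)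

private lemma cast_zero_iff (p₁ p₂ p : ℕ) [NeZero p] (h : p ∣ 6 * p₁ * p₂)
    (x : ZMod (6 * p₁ * p₂)) [NeZero (6 * p₁ * p₂)] :
    ZMod.castHom h (ZMod p) x = 0 ↔ p ∣ x.val := by
  rw [ZMod.castHom_apply, ← ZMod.natCast_val, ZMod.natCast_eq_zero_iff]

private lemma psi_inj {p₁ p₂ : ℕ} (hp₁ : p₁.Prime) (hp₂ : p₂.Prime)
    (h1 : 5 ≤ p₁) (h12 : p₁ < p₂) : Function.Injective (psi p₁ p₂) := by
  have hpos : 0 < 6 * p₁ * p₂ := by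
    have := hp₁.pos; have := hp₂.pos; positivity
  haveI : NeZero (6 * p₁ * p₂) := ⟨by omega⟩
  haveI : NeZero p₁ := ⟨hp₁.ne_zero⟩
  haveI : NeZero p₂ := ⟨hp₂.ne_zero⟩
  have c2p1 : Nat.Coprime 2 p₁ := (Nat.coprime_primes Nat.prime_two hp₁).mpr (by omega)
  have c2p2 : Nat.Coprime 2 p₂ := (Nat.coprime_primes Nat.prime_two hp₂).mpr (by omega)
  have c3p1 : Nat.Coprime 3 p₁ := (Nat.coprime_primes Nat.prime_three hp₁).mpr (by omega)
  have c3p2 : Nat.Coprime 3 p₂ := (Nat.coprime_primes Nat.prime_three hp₂).mpr (by omega)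
  have cp12 : Nat.Coprime p₁ p₂ := (Nat.coprime_primes hp₁ hp₂).mpr (by omega)
  intro x y hxy
  have e1 := congrArg Prod.fst hxy
  have e2 := congrArg (fun t => t.2.1) hxy
  have e3 := congrArg (fun t => t.2.2.1) hxy
  have e4 := congrArg (fun t => t.2.2.2) hxy
  simp only [psi] at e1 e2 e3 e4
  have d2 : (2:ℕ) ∣ (x - y).val := by
    rw [← cast_zero_iff p₁ p₂ 2 ⟨3 * p₁ * p₂, by ring⟩, map_sub, e1, sub_self]
  have d3 : (3:ℕ) ∣ (x - y).val := by
    rw [← cast_zero_iff p₁ p₂ 3 ⟨2 * p₁ * p₂, by ring⟩, map_sub, e2, sub_self]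
  have dp1 : p₁ ∣ (x - y).val := by
    rw [← cast_zero_iff p₁ p₂ p₁ ⟨6 * p₂, by ring⟩, map_sub, e3, sub_self]
  have dp2 : p₂ ∣ (x - y).val := by
    rw [← cast_zero_iff p₁ p₂ p₂ ⟨6 * p₁, by ring⟩, map_sub, e4, sub_self]
  have d6 : (6:ℕ) ∣ (x - y).val := (by decide : Nat.Coprime 2 3).mul_dvd_of_dvd_of_dvd d2 d3
  have d6p1 : 6 * p₁ ∣ (x - y).val :=
    (Nat.Coprime.mul c2p1 c3p1).mul_dvd_of_dvd_of_dvd d6 dp1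
  have dn : 6 * p₁ * p₂ ∣ (x - y).val :=
    (Nat.Coprime.mul (Nat.Coprime.mul c2p2 c3p2) cp12).mul_dvd_of_dvd_of_dvd d6p1 dp2
  have hlt : (x - y).val < 6 * p₁ * p₂ := ZMod.val_lt _
  have hv0 : (x - y).val = 0 := Nat.eq_zero_of_dvd_of_lt dn hlt
  have hxy0 : x - y = 0 := by rwa [ZMod.val_eq_zero] at hv0
  exact sub_eq_zero.mp hxy0

private lemma psi_bij {p₁ p₂ : ℕ} (hp₁ : p₁.Prime) (hp₂ : p₂.Prime)
    (h1 : 5 ≤ p₁) (h12 : p₁ < p₂) : Function.Bijective (psi p₁ p₂) := by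
  have hpos : 0 < 6 * p₁ * p₂ := by have := hp₁.pos; have := hp₂.pos; positivity
  haveI : NeZero (6 * p₁ * p₂) := ⟨by omega⟩
  haveI : NeZero p₁ := ⟨hp₁.pos.ne'⟩
  haveI : NeZero p₂ := ⟨hp₂.pos.ne'⟩
  rw [Fintype.bijective_iff_injective_and_card]
  refine ⟨psi_inj hp₁ hp₂ h1 h12, ?_⟩
  simp only [Fintype.card_prod, ZMod.card]
  ring

private lemma psi_unit {p₁ p₂ : ℕ} (hp₁ : p₁.Prime) (hp₂ : p₂.Prime)
    (h1 : 5 ≤ p₁) (h12 : p₁ < p₂) (x : ZMod (6 * p₁ * p₂)) :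
    IsUnit x ↔ ((psi p₁ p₂ x).1 ≠ 0 ∧ (psi p₁ p₂ x).2.1 ≠ 0 ∧
      (psi p₁ p₂ x).2.2.1 ≠ 0 ∧ (psi p₁ p₂ x).2.2.2 ≠ 0) := by
  have hpos : 0 < 6 * p₁ * p₂ := by have := hp₁.pos; have := hp₂.pos; positivity
  haveI : NeZero (6 * p₁ * p₂) := ⟨by omega⟩
  have h0 : IsUnit x ↔ x.val.Coprime (6 * p₁ * p₂) := by
    have := ZMod.isUnit_iff_coprime x.val (6 * p₁ * p₂)
    rwa [ZMod.natCast_zmod_val x] at this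
  have swap : ∀ (p : ℕ), p.Prime → ∀ (h : p ∣ 6 * p₁ * p₂),
      (x.val.Coprime p ↔ ZMod.castHom h (ZMod p) x ≠ 0) := by
    intro p pp h
    haveI : NeZero p := ⟨pp.pos.ne'⟩
    rw [Nat.coprime_comm, pp.coprime_iff_not_dvd, ← cast_zero_iff p₁ p₂ p h x]
  have hsplit : ∀ k : ℕ, k.Coprime (6 * p₁ * p₂) ↔
      (k.Coprime 2 ∧ k.Coprime 3 ∧ k.Coprime p₁ ∧ k.Coprime p₂) := by
    intro k
    rw [show 6 * p₁ * p₂ = 2 * (3 * (p₁ * p₂)) from by ring,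
      Nat.coprime_mul_iff_right, Nat.coprime_mul_iff_right, Nat.coprime_mul_iff_right]
  rw [h0, hsplit]
  exact and_congr (swap 2 Nat.prime_two ⟨3 * p₁ * p₂, by ring⟩)
    (and_congr (swap 3 Nat.prime_three ⟨2 * p₁ * p₂, by ring⟩)
      (and_congr (swap p₁ hp₁ ⟨6 * p₂, by ring⟩) (swap p₂ hp₂ ⟨6 * p₁, by ring⟩)))

private lemma psi_sub {p₁ p₂ : ℕ} (x y : ZMod (6 * p₁ * p₂)) :
    psi p₁ p₂ (x - y) = psi p₁ p₂ x - psi p₁ p₂ y := by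
  simp [psi, map_sub, Prod.ext_iff, -ZMod.castHom_apply]

private lemma gcd_ne_one {p₁ p₂ : ℕ} (hp₁ : p₁.Prime) (hp₂ : p₂.Prime)
    (h1 : 5 ≤ p₁) (h12 : p₁ < p₂) {p : ℕ} (pp : 1 < p)
    (h : p ∣ 6 * p₁ * p₂) (w : ZMod (6 * p₁ * p₂)) (i : ℕ)
    (hz : (ZMod.cast w : ZMod p) + (i : ZMod p) = 0) :
    Int.gcd ((w.val : ℤ) + (i : ℤ)) ((6 * p₁ * p₂ : ℕ) : ℤ) ≠ 1 := by
  have hpos : 0 < 6 * p₁ * p₂ := by have := hp₁.pos; have := hp₂.pos; positivity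
  haveI : NeZero (6 * p₁ * p₂) := ⟨by omega⟩
  haveI : NeZero p := ⟨by omega⟩
  intro hgcd
  have hc : (((w.val : ℤ) + (i : ℤ) : ℤ) : ZMod p) = 0 := by
    push_cast
    rw [ZMod.natCast_val]
    exact hz
  have h2 : (p : ℤ) ∣ ((w.val : ℤ) + (i : ℤ)) := (ZMod.intCast_zmod_eq_zero_iff_dvd _ p).mp hc
  have h3 : (p : ℤ) ∣ ((6 * p₁ * p₂ : ℕ) : ℤ) := Int.natCast_dvd_natCast.mpr h
  have h4 := Int.dvd_gcd h2 h3
  rw [hgcd] at h4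
  have : p ∣ 1 := by exact_mod_cast h4
  have hp1 : p = 1 := Nat.dvd_one.mp this
  omega

private lemma zmod_cast_ne {p : ℕ} {a b : ℕ} (ha : a < p) (hb : b < p)
    (hab : a ≠ b) : ((a : ℕ) : ZMod p) ≠ ((b : ℕ) : ZMod p) := by
  intro h
  apply hab
  have := congrArg ZMod.val h
  rwa [ZMod.val_natCast_of_lt ha, ZMod.val_natCast_of_lt hb] at this

private lemma zmod2_cases : ∀ z : ZMod 2, z = ((0 : ℕ) : ZMod 2) ∨ z = ((1 : ℕ) : ZMod 2) := by
  decide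

private lemma zmod3_cases : ∀ z : ZMod 3,
    z = ((0 : ℕ) : ZMod 3) ∨ z = ((1 : ℕ) : ZMod 3) ∨ z = ((2 : ℕ) : ZMod 3) := by decide

private def mkT (p₁ p₂ a b c d : ℕ) : ZMod 2 × ZMod 3 × ZMod p₁ × ZMod p₂ :=
  ((a : ZMod 2), (b : ZMod 3), (c : ZMod p₁), (d : ZMod p₂))

private def tset (p₁ p₂ : ℕ) : Set (ZMod 2 × ZMod 3 × ZMod p₁ × ZMod p₂) :=
  {mkT p₁ p₂ 0 1 0 1, mkT p₁ p₂ 0 1 4 3, mkT p₁ p₂ 1 1 3 1, mkT p₁ p₂ 0 2 4 1,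
   mkT p₁ p₂ 1 2 1 3, mkT p₁ p₂ 0 2 3 2, mkT p₁ p₂ 1 0 4 2, mkT p₁ p₂ 0 0 1 4,
   mkT p₁ p₂ 1 2 2 0}

private lemma tset_ncard {p₁ p₂ : ℕ} : (tset p₁ p₂).ncard ≤ 9 := by
  unfold tset
  have h8 : ∀ (s : Set (ZMod 2 × ZMod 3 × ZMod p₁ × ZMod p₂)) (a : _) (k : ℕ),
      s.ncard ≤ k → (insert a s).ncard ≤ k + 1 :=
    fun s a k h => (Set.ncard_insert_le a s).trans (by omega)
  have h1 : ({mkT p₁ p₂ 1 2 2 0} : Set _).ncard ≤ 1 := le_of_eq (Set.ncard_singleton _)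
  exact h8 _ _ 8 (h8 _ _ 7 (h8 _ _ 6 (h8 _ _ 5 (h8 _ _ 4 (h8 _ _ 3 (h8 _ _ 2 (h8 _ _ 1 h1)))))))

private lemma adj_of {p₁ p₂ : ℕ} (hp₁ : p₁.Prime) (hp₂ : p₂.Prime)
    (h1 : 5 ≤ p₁) (h12 : p₁ < p₂) (v : ZMod (6 * p₁ * p₂))
    (t : ZMod 2 × ZMod 3 × ZMod p₁ × ZMod p₂)
    (e1' : (psi p₁ p₂ v).1 ≠ t.1) (e2' : (psi p₁ p₂ v).2.1 ≠ t.2.1)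
    (e3' : (psi p₁ p₂ v).2.2.1 ≠ t.2.2.1) (e4' : (psi p₁ p₂ v).2.2.2 ≠ t.2.2.2) :
    (unitaryCayley (6 * p₁ * p₂)).Adj v
      ((Equiv.ofBijective _ (psi_bij hp₁ hp₂ h1 h12)).symm t) := by
  have hpsid : psi p₁ p₂ ((Equiv.ofBijective _ (psi_bij hp₁ hp₂ h1 h12)).symm t) = t :=
    (Equiv.ofBijective _ (psi_bij hp₁ hp₂ h1 h12)).apply_symm_apply t
  refine ⟨?_, ?_⟩
  · intro hvd
    exact e1' (by rw [hvd, hpsid])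
  · rw [psi_unit hp₁ hp₂ h1 h12, psi_sub, hpsid]
    exact ⟨sub_ne_zero_of_ne e1', sub_ne_zero_of_ne e2',
      sub_ne_zero_of_ne e3', sub_ne_zero_of_ne e4'⟩


theorem stmt11' (p₁ p₂ : ℕ) (hp₁ : p₁.Prime) (hp₂ : p₂.Prime)
    (h1 : 5 ≤ p₁) (h12 : p₁ < p₂) :
    10 ≤ jacobsthal (6 * p₁ * p₂) ∧
      domNum (unitaryCayley (6 * p₁ * p₂)) < jacobsthal (6 * p₁ * p₂) := by
  have hpos : 0 < 6 * p₁ * p₂ := by have := hp₁.pos; have := hp₂.pos; positivity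
  haveI : NeZero (6 * p₁ * p₂) := ⟨by omega⟩
  have h5q : 5 ≤ p₂ := by omega
  have hbij := psi_bij hp₁ hp₂ h1 h12
  -- Part A : 10 ≤ jacobsthal
  have hjac : 10 ≤ jacobsthal (6 * p₁ * p₂) := by
    obtain ⟨w, hw⟩ := hbij.2
      ((0 : ZMod 2), (-1 : ZMod 3), (-((3 : ℕ) : ZMod p₁)), (-((5 : ℕ) : ZMod p₂)))
    have hw1 : (ZMod.cast w : ZMod 2) = 0 := by simpa [psi] using congrArg Prod.fst hw
    have hw2 : (ZMod.cast w : ZMod 3) = -1 := by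
      simpa [psi] using congrArg (fun t => t.2.1) hw
    have hw3 : (ZMod.cast w : ZMod p₁) = -((3 : ℕ) : ZMod p₁) := by
      simpa [psi] using congrArg (fun t => t.2.2.1) hw
    have hw4 : (ZMod.cast w : ZMod p₂) = -((5 : ℕ) : ZMod p₂) := by
      simpa [psi] using congrArg (fun t => t.2.2.2) hw
    apply le_csInf
    · refine ⟨6 * p₁ * p₂, hpos, fun x => ?_⟩
      have hN : (0 : ℤ) < ((6 * p₁ * p₂ : ℕ) : ℤ) := by exact_mod_cast hpos
      have hm0 : 0 ≤ (1 - x) % ((6 * p₁ * p₂ : ℕ) : ℤ) := Int.emod_nonneg _ (ne_of_gt hN)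
      have hm1 : (1 - x) % ((6 * p₁ * p₂ : ℕ) : ℤ) < ((6 * p₁ * p₂ : ℕ) : ℤ) :=
        Int.emod_lt_of_pos _ hN
      refine ⟨((1 - x) % ((6 * p₁ * p₂ : ℕ) : ℤ)).toNat, by omega, ?_⟩
      have ht : ((((1 - x) % ((6 * p₁ * p₂ : ℕ) : ℤ)).toNat : ℤ))
          = (1 - x) % ((6 * p₁ * p₂ : ℕ) : ℤ) := Int.toNat_of_nonneg hm0
      rw [ht]
      have hre : x + (1 - x) % ((6 * p₁ * p₂ : ℕ) : ℤ)
          = 1 + ((6 * p₁ * p₂ : ℕ) : ℤ) * (-((1 - x) / ((6 * p₁ * p₂ : ℕ) : ℤ))) := by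
        rw [Int.emod_def]; ring
      rw [hre, ← Int.isCoprime_iff_gcd_eq_one]
      exact (isCoprime_one_left).add_mul_left_left _
    · rintro m ⟨hm0, hm⟩
      by_contra hcon
      push_neg at hcon
      obtain ⟨i, hi, hgcd⟩ := hm ((w.val : ℤ))
      have hi9 : i < 9 := by omega
      interval_cases i
      · exact gcd_ne_one hp₁ hp₂ h1 h12 (p := 2) (by norm_num) ⟨3 * p₁ * p₂, by ring⟩ w 0
          (by rw [hw1]; decide) hgcd
      · exact gcd_ne_one hp₁ hp₂ h1 h12 (p := 3) (by norm_num) ⟨2 * p₁ * p₂, by ring⟩ w 1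
          (by rw [hw2]; decide) hgcd
      · exact gcd_ne_one hp₁ hp₂ h1 h12 (p := 2) (by norm_num) ⟨3 * p₁ * p₂, by ring⟩ w 2
          (by rw [hw1]; decide) hgcd
      · exact gcd_ne_one hp₁ hp₂ h1 h12 (p := p₁) (by omega) ⟨6 * p₂, by ring⟩ w 3
          (by rw [hw3]; exact neg_add_cancel _) hgcd
      · exact gcd_ne_one hp₁ hp₂ h1 h12 (p := 2) (by norm_num) ⟨3 * p₁ * p₂, by ring⟩ w 4
          (by rw [hw1]; decide) hgcd
      · exact gcd_ne_one hp₁ hp₂ h1 h12 (p := p₂) (by omega) ⟨6 * p₁, by ring⟩ w 5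
          (by rw [hw4]; exact neg_add_cancel _) hgcd
      · exact gcd_ne_one hp₁ hp₂ h1 h12 (p := 2) (by norm_num) ⟨3 * p₁ * p₂, by ring⟩ w 6
          (by rw [hw1]; decide) hgcd
      · exact gcd_ne_one hp₁ hp₂ h1 h12 (p := 3) (by norm_num) ⟨2 * p₁ * p₂, by ring⟩ w 7
          (by rw [hw2]; decide) hgcd
      · exact gcd_ne_one hp₁ hp₂ h1 h12 (p := 2) (by norm_num) ⟨3 * p₁ * p₂, by ring⟩ w 8
          (by rw [hw1]; decide) hgcd
  refine ⟨hjac, ?_⟩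
  -- Part B : domination number ≤ 9
  set e := Equiv.ofBijective _ hbij with he
  set D : Set (ZMod (6 * p₁ * p₂)) := e.symm '' tset p₁ p₂ with hD
  have hcard : D.ncard ≤ 9 := by
    rw [hD, Set.ncard_image_of_injective _ e.symm.injective]
    exact tset_ncard
  have step : ∀ (v : ZMod (6 * p₁ * p₂)), ∀ t ∈ tset p₁ p₂,
      (psi p₁ p₂ v).1 ≠ t.1 → (psi p₁ p₂ v).2.1 ≠ t.2.1 →
      (psi p₁ p₂ v).2.2.1 ≠ t.2.2.1 → (psi p₁ p₂ v).2.2.2 ≠ t.2.2.2 →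
      ∃ d ∈ D, (unitaryCayley (6 * p₁ * p₂)).Adj v d := by
    intro v t ht e1' e2' e3' e4'
    exact ⟨e.symm t, Set.mem_image_of_mem _ ht, adj_of hp₁ hp₂ h1 h12 v t e1' e2' e3' e4'⟩
  have hmemD : ∀ (v : ZMod (6 * p₁ * p₂)) (t : ZMod 2 × ZMod 3 × ZMod p₁ × ZMod p₂),
      t ∈ tset p₁ p₂ → psi p₁ p₂ v = t → v ∈ D := by
    intro v t ht hvt
    refine ⟨t, ht, ?_⟩
    rw [← hvt]
    exact e.symm_apply_apply v
  have hIsDom : IsDomSet (unitaryCayley (6 * p₁ * p₂)) D := by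
    intro v
    rcases zmod2_cases (psi p₁ p₂ v).1 with ha1 | ha1 <;>
      rcases zmod3_cases (psi p₁ p₂ v).2.1 with ha2 | ha2 | ha2
    · -- class (0,0) : T3(1,1,3,1), T5(1,2,1,3), T9(1,2,2,0)
      rcases diag3 ((psi p₁ p₂ v).2.2.1) ((3:ℕ) : ZMod p₁) ((1:ℕ) : ZMod p₁) ((2:ℕ) : ZMod p₁)
          ((psi p₁ p₂ v).2.2.2) ((1:ℕ) : ZMod p₂) ((3:ℕ) : ZMod p₂) ((0:ℕ) : ZMod p₂)
          (zmod_cast_ne (by omega) (by omega) (by omega))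
          (zmod_cast_ne (by omega) (by omega) (by omega))
          (zmod_cast_ne (by omega) (by omega) (by omega))
          (zmod_cast_ne (by omega) (by omega) (by omega))
          (zmod_cast_ne (by omega) (by omega) (by omega))
          (zmod_cast_ne (by omega) (by omega) (by omega)) with ⟨h3, h4⟩ | ⟨h3, h4⟩ | ⟨h3, h4⟩
      · exact Or.inr (step v (mkT p₁ p₂ 1 1 3 1) (by simp [tset])
          (by rw [ha1]; exact zmod_cast_ne (by omega) (by omega) (by omega)) (by rw [ha2]; exact zmod_cast_ne (by omega) (by omega) (by omega)) h3 h4)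
      · exact Or.inr (step v (mkT p₁ p₂ 1 2 1 3) (by simp [tset])
          (by rw [ha1]; exact zmod_cast_ne (by omega) (by omega) (by omega)) (by rw [ha2]; exact zmod_cast_ne (by omega) (by omega) (by omega)) h3 h4)
      · exact Or.inr (step v (mkT p₁ p₂ 1 2 2 0) (by simp [tset])
          (by rw [ha1]; exact zmod_cast_ne (by omega) (by omega) (by omega)) (by rw [ha2]; exact zmod_cast_ne (by omega) (by omega) (by omega)) h3 h4)
    · -- class (0,1) : T5(1,2,1,3), T7(1,0,4,2), T9(1,2,2,0)
      rcases diag3 ((psi p₁ p₂ v).2.2.1) ((1:ℕ) : ZMod p₁) ((4:ℕ) : ZMod p₁) ((2:ℕ) : ZMod p₁)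
          ((psi p₁ p₂ v).2.2.2) ((3:ℕ) : ZMod p₂) ((2:ℕ) : ZMod p₂) ((0:ℕ) : ZMod p₂)
          (zmod_cast_ne (by omega) (by omega) (by omega))
          (zmod_cast_ne (by omega) (by omega) (by omega))
          (zmod_cast_ne (by omega) (by omega) (by omega))
          (zmod_cast_ne (by omega) (by omega) (by omega))
          (zmod_cast_ne (by omega) (by omega) (by omega))
          (zmod_cast_ne (by omega) (by omega) (by omega)) with ⟨h3, h4⟩ | ⟨h3, h4⟩ | ⟨h3, h4⟩
      · exact Or.inr (step v (mkT p₁ p₂ 1 2 1 3) (by simp [tset])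
          (by rw [ha1]; exact zmod_cast_ne (by omega) (by omega) (by omega)) (by rw [ha2]; exact zmod_cast_ne (by omega) (by omega) (by omega)) h3 h4)
      · exact Or.inr (step v (mkT p₁ p₂ 1 0 4 2) (by simp [tset])
          (by rw [ha1]; exact zmod_cast_ne (by omega) (by omega) (by omega)) (by rw [ha2]; exact zmod_cast_ne (by omega) (by omega) (by omega)) h3 h4)
      · exact Or.inr (step v (mkT p₁ p₂ 1 2 2 0) (by simp [tset])
          (by rw [ha1]; exact zmod_cast_ne (by omega) (by omega) (by omega)) (by rw [ha2]; exact zmod_cast_ne (by omega) (by omega) (by omega)) h3 h4)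
    · -- class (0,2) : candidates T3(1,1,3,1), T7(1,0,4,2); kill pts (3,2)→T6, (4,1)→T4
      by_cases h33 : (psi p₁ p₂ v).2.2.1 = ((3:ℕ) : ZMod p₁)
      · by_cases h42 : (psi p₁ p₂ v).2.2.2 = ((2:ℕ) : ZMod p₂)
        · exact Or.inl (hmemD v (mkT p₁ p₂ 0 2 3 2) (by simp [tset])
            (Prod.ext ha1 (Prod.ext ha2 (Prod.ext h33 h42))))
        · refine Or.inr (step v (mkT p₁ p₂ 1 0 4 2) (by simp [tset])
            (by rw [ha1]; exact zmod_cast_ne (by omega) (by omega) (by omega)) (by rw [ha2]; exact zmod_cast_ne (by omega) (by omega) (by omega)) ?_ h42)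
          rw [h33]; exact zmod_cast_ne (by omega) (by omega) (by omega)
      · by_cases h41 : (psi p₁ p₂ v).2.2.2 = ((1:ℕ) : ZMod p₂)
        · by_cases h34 : (psi p₁ p₂ v).2.2.1 = ((4:ℕ) : ZMod p₁)
          · exact Or.inl (hmemD v (mkT p₁ p₂ 0 2 4 1) (by simp [tset])
              (Prod.ext ha1 (Prod.ext ha2 (Prod.ext h34 h41))))
          · refine Or.inr (step v (mkT p₁ p₂ 1 0 4 2) (by simp [tset])
              (by rw [ha1]; exact zmod_cast_ne (by omega) (by omega) (by omega)) (by rw [ha2]; exact zmod_cast_ne (by omega) (by omega) (by omega)) h34 ?_)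
            rw [h41]; exact zmod_cast_ne (by omega) (by omega) (by omega)
        · exact Or.inr (step v (mkT p₁ p₂ 1 1 3 1) (by simp [tset])
            (by rw [ha1]; exact zmod_cast_ne (by omega) (by omega) (by omega)) (by rw [ha2]; exact zmod_cast_ne (by omega) (by omega) (by omega)) h33 h41)
    · -- class (1,0) : T1(0,1,0,1), T2(0,1,4,3), T6(0,2,3,2)
      rcases diag3 ((psi p₁ p₂ v).2.2.1) ((0:ℕ) : ZMod p₁) ((4:ℕ) : ZMod p₁) ((3:ℕ) : ZMod p₁)
          ((psi p₁ p₂ v).2.2.2) ((1:ℕ) : ZMod p₂) ((3:ℕ) : ZMod p₂) ((2:ℕ) : ZMod p₂)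
          (zmod_cast_ne (by omega) (by omega) (by omega))
          (zmod_cast_ne (by omega) (by omega) (by omega))
          (zmod_cast_ne (by omega) (by omega) (by omega))
          (zmod_cast_ne (by omega) (by omega) (by omega))
          (zmod_cast_ne (by omega) (by omega) (by omega))
          (zmod_cast_ne (by omega) (by omega) (by omega)) with ⟨h3, h4⟩ | ⟨h3, h4⟩ | ⟨h3, h4⟩
      · exact Or.inr (step v (mkT p₁ p₂ 0 1 0 1) (by simp [tset])
          (by rw [ha1]; exact zmod_cast_ne (by omega) (by omega) (by omega)) (by rw [ha2]; exact zmod_cast_ne (by omega) (by omega) (by omega)) h3 h4)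
      · exact Or.inr (step v (mkT p₁ p₂ 0 1 4 3) (by simp [tset])
          (by rw [ha1]; exact zmod_cast_ne (by omega) (by omega) (by omega)) (by rw [ha2]; exact zmod_cast_ne (by omega) (by omega) (by omega)) h3 h4)
      · exact Or.inr (step v (mkT p₁ p₂ 0 2 3 2) (by simp [tset])
          (by rw [ha1]; exact zmod_cast_ne (by omega) (by omega) (by omega)) (by rw [ha2]; exact zmod_cast_ne (by omega) (by omega) (by omega)) h3 h4)
    · -- class (1,1) : T4(0,2,4,1), T6(0,2,3,2), T8(0,0,1,4)
      rcases diag3 ((psi p₁ p₂ v).2.2.1) ((4:ℕ) : ZMod p₁) ((3:ℕ) : ZMod p₁) ((1:ℕ) : ZMod p₁)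
          ((psi p₁ p₂ v).2.2.2) ((1:ℕ) : ZMod p₂) ((2:ℕ) : ZMod p₂) ((4:ℕ) : ZMod p₂)
          (zmod_cast_ne (by omega) (by omega) (by omega))
          (zmod_cast_ne (by omega) (by omega) (by omega))
          (zmod_cast_ne (by omega) (by omega) (by omega))
          (zmod_cast_ne (by omega) (by omega) (by omega))
          (zmod_cast_ne (by omega) (by omega) (by omega))
          (zmod_cast_ne (by omega) (by omega) (by omega)) with ⟨h3, h4⟩ | ⟨h3, h4⟩ | ⟨h3, h4⟩
      · exact Or.inr (step v (mkT p₁ p₂ 0 2 4 1) (by simp [tset])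
          (by rw [ha1]; exact zmod_cast_ne (by omega) (by omega) (by omega)) (by rw [ha2]; exact zmod_cast_ne (by omega) (by omega) (by omega)) h3 h4)
      · exact Or.inr (step v (mkT p₁ p₂ 0 2 3 2) (by simp [tset])
          (by rw [ha1]; exact zmod_cast_ne (by omega) (by omega) (by omega)) (by rw [ha2]; exact zmod_cast_ne (by omega) (by omega) (by omega)) h3 h4)
      · exact Or.inr (step v (mkT p₁ p₂ 0 0 1 4) (by simp [tset])
          (by rw [ha1]; exact zmod_cast_ne (by omega) (by omega) (by omega)) (by rw [ha2]; exact zmod_cast_ne (by omega) (by omega) (by omega)) h3 h4)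
    · -- class (1,2) : T1(0,1,0,1), T2(0,1,4,3), T8(0,0,1,4)
      rcases diag3 ((psi p₁ p₂ v).2.2.1) ((0:ℕ) : ZMod p₁) ((4:ℕ) : ZMod p₁) ((1:ℕ) : ZMod p₁)
          ((psi p₁ p₂ v).2.2.2) ((1:ℕ) : ZMod p₂) ((3:ℕ) : ZMod p₂) ((4:ℕ) : ZMod p₂)
          (zmod_cast_ne (by omega) (by omega) (by omega))
          (zmod_cast_ne (by omega) (by omega) (by omega))
          (zmod_cast_ne (by omega) (by omega) (by omega))
          (zmod_cast_ne (by omega) (by omega) (by omega))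
          (zmod_cast_ne (by omega) (by omega) (by omega))
          (zmod_cast_ne (by omega) (by omega) (by omega)) with ⟨h3, h4⟩ | ⟨h3, h4⟩ | ⟨h3, h4⟩
      · exact Or.inr (step v (mkT p₁ p₂ 0 1 0 1) (by simp [tset])
          (by rw [ha1]; exact zmod_cast_ne (by omega) (by omega) (by omega)) (by rw [ha2]; exact zmod_cast_ne (by omega) (by omega) (by omega)) h3 h4)
      · exact Or.inr (step v (mkT p₁ p₂ 0 1 4 3) (by simp [tset])
          (by rw [ha1]; exact zmod_cast_ne (by omega) (by omega) (by omega)) (by rw [ha2]; exact zmod_cast_ne (by omega) (by omega) (by omega)) h3 h4)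
      · exact Or.inr (step v (mkT p₁ p₂ 0 0 1 4) (by simp [tset])
          (by rw [ha1]; exact zmod_cast_ne (by omega) (by omega) (by omega)) (by rw [ha2]; exact zmod_cast_ne (by omega) (by omega) (by omega)) h3 h4)
  have hdle : domNum (unitaryCayley (6 * p₁ * p₂)) ≤ D.ncard :=
    Nat.sInf_le ⟨D, hIsDom, rfl⟩
  omega

theorem stmt11 (p₁ p₂ n : ℕ) (hp₁ : p₁.Prime) (hp₂ : p₂.Prime)
    (h1 : 5 ≤ p₁) (h12 : p₁ < p₂) (hn : n = 6 * p₁ * p₂) :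
    10 ≤ jacobsthal n ∧ domNum (unitaryCayley n) < jacobsthal n := by
  subst hn
  exact stmt11' p₁ p₂ hp₁ hp₂ h1 h12
end

section
/- Let q be a prime with q ≡ 1 (mod 3), k = 2(q-1)/3, and p₁, ..., p_k distinct primes each at least q+3. Let n = 3·q·p₁⋯p_k. Choose y ∈ ℤ/nℤ with y ≡ 1 (mod 3), y ≡ -1 (mod q), and y ≡ -1 (mod p_i) for all i. Then D = {0, 1, ..., q+1, y} is a total dominating set of the unitary Cayley graph X_n of size q+3. -/
lemma aux_filter_mod_card (m t a : ℕ) (hm : 0 < m) (ha : a < m) :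
    ((Finset.range (m * t)).filter (fun d => d % m = a)).card = t := by
  have he : (Finset.range (m * t)).filter (fun d => d % m = a)
      = (Finset.range t).image (fun j => m * j + a) := by
    ext d
    simp only [Finset.mem_filter, Finset.mem_range, Finset.mem_image]
    constructor
    · rintro ⟨hd, hmod⟩
      refine ⟨d / m, ?_, ?_⟩
      · exact Nat.div_lt_of_lt_mul (by omega)
      · conv_rhs => rw [← Nat.div_add_mod d m, hmod]
    · rintro ⟨j, hj, rfl⟩
      constructor
      · calc m * j + a < m * j + m := by omega
          _ = m * (j + 1) := by ring
          _ ≤ m * t := Nat.mul_le_mul_left m hj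
      · rw [Nat.mul_add_mod, Nat.mod_eq_of_lt ha]
  rw [he, Finset.card_image_of_injective _ (fun x y h => by
    exact Nat.eq_of_mul_eq_mul_left hm (by omega)), Finset.card_range]

lemma aux_exists_good (q m k : ℕ) (hqm : q = 3 * m + 1) (hq7 : 7 ≤ q) (hk : k = 2 * m)
    (p : Fin k → ℕ) (hge : ∀ i, q + 3 ≤ p i)
    (a b : ℕ) (c : Fin k → ℕ) (hb : b < q)
    (hextra : a = 1 ∨ b = q - 1 ∨ ∃ i₀, c i₀ = p i₀ - 1) :
    ∃ d, d ≤ q + 1 ∧ d % 3 ≠ a ∧ d % q ≠ b ∧ ∀ i, d % p i ≠ c i := by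
  classical
  set S := (Finset.range (q + 2)).filter (fun d => d % 3 ≠ a ∧ d % q ≠ b) with hS
  set A3 := (Finset.range (q + 2)).filter (fun d => d % 3 = a) with hA3
  set Aq := (Finset.range (q + 2)).filter (fun d => d % q = b) with hAq
  set Bad := (Finset.range (q + 2)).filter (fun d => ∃ i, d % p i = c i) with hBad
  have hA3card : A3.card ≤ m + 1 := by
    rcases Nat.lt_or_ge a 3 with ha | ha
    · have h32 : q + 2 = 3 * (m + 1) := by omega
      rw [hA3, h32, aux_filter_mod_card 3 (m + 1) a (by norm_num) ha]
    · have : A3 = ∅ := by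
        rw [hA3]
        refine Finset.filter_false_of_mem (fun d _ => ?_)
        have := Nat.mod_lt d (show 0 < 3 by norm_num)
        omega
      simp [this]
  -- every element of Aq is b or b + q
  have hAqmem : ∀ d ∈ Aq, d = b ∨ d = b + q := by
    intro d hd
    rw [hAq, Finset.mem_filter, Finset.mem_range] at hd
    obtain ⟨hd1, hd2⟩ := hd
    have h2 : d = q * (d / q) + b := by rw [← hd2]; exact (Nat.div_add_mod d q).symm
    have h3 : d / q < 2 := Nat.div_lt_of_lt_mul (by omega)
    interval_cases h : d / q <;> omega
  -- cover
  have hcover : Finset.range (q + 2) ⊆ S ∪ (A3 ∪ (Aq \ A3)) := by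
    intro d hd
    rw [Finset.mem_union, Finset.mem_union, Finset.mem_sdiff]
    by_cases h3 : d % 3 = a
    · exact Or.inr (Or.inl (Finset.mem_filter.mpr ⟨hd, h3⟩))
    · by_cases hqq : d % q = b
      · exact Or.inr (Or.inr ⟨Finset.mem_filter.mpr ⟨hd, hqq⟩, by
          rw [hA3, Finset.mem_filter]; tauto⟩)
      · exact Or.inl (Finset.mem_filter.mpr ⟨hd, h3, hqq⟩)
  have hScard : q + 2 ≤ S.card + A3.card + (Aq \ A3).card := by
    calc q + 2 = (Finset.range (q + 2)).card := (Finset.card_range _).symm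
      _ ≤ (S ∪ (A3 ∪ (Aq \ A3))).card := Finset.card_le_card hcover
      _ ≤ S.card + (A3 ∪ (Aq \ A3)).card := Finset.card_union_le _ _
      _ ≤ S.card + (A3.card + (Aq \ A3).card) := by
          exact Nat.add_le_add_left (Finset.card_union_le _ _) _
      _ = S.card + A3.card + (Aq \ A3).card := by ring
  -- Bad bounded by image
  have hBadsub : ∀ (E : Finset (Fin k)), (∀ i, i ∉ E → ∀ d < q + 2, d ≠ c i) →
      Bad ⊆ E.image c := by
    intro E hE d hd
    rw [hBad, Finset.mem_filter, Finset.mem_range] at hd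
    obtain ⟨hd1, i, hd2⟩ := hd
    have hdp : d % p i = d := Nat.mod_eq_of_lt (by have := hge i; omega)
    rw [hdp] at hd2
    rw [Finset.mem_image]
    refine ⟨i, ?_, hd2.symm⟩
    by_contra hiE
    exact hE i hiE d hd1 hd2
  -- final step
  have hfinal : Bad.card < S.card → ∃ d, d ≤ q + 1 ∧ d % 3 ≠ a ∧ d % q ≠ b ∧
      ∀ i, d % p i ≠ c i := by
    intro hlt
    have : ¬ S ⊆ Bad := fun h => absurd (Finset.card_le_card h) (by omega)
    obtain ⟨d, hdS, hdB⟩ := Finset.not_subset.mp this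
    rw [hS, Finset.mem_filter, Finset.mem_range] at hdS
    refine ⟨d, by omega, hdS.2.1, hdS.2.2, fun i => ?_⟩
    intro hdi
    apply hdB
    rw [hBad, Finset.mem_filter, Finset.mem_range]
    exact ⟨hdS.1, i, hdi⟩
  apply hfinal
  have hBadk : Bad.card ≤ k := by
    calc Bad.card ≤ ((Finset.univ : Finset (Fin k)).image c).card :=
          Finset.card_le_card (hBadsub _ (fun i hi => absurd (Finset.mem_univ i) hi))
      _ ≤ (Finset.univ : Finset (Fin k)).card := Finset.card_image_le
      _ = k := by simp
  rcases hextra with ha1 | hbq | ⟨i₀, hi₀⟩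
  · -- a = 1 : Aq \ A3 ⊆ {e}
    have he : ∃ e, ∀ d ∈ Aq \ A3, d = e := by
      rcases Nat.lt_or_ge b 2 with hb2 | hb2
      · interval_cases b
        · refine ⟨0, fun d hd => ?_⟩
          rw [Finset.mem_sdiff] at hd
          rcases hAqmem d hd.1 with h | h
          · omega
          · exfalso; apply hd.2
            rw [hA3, Finset.mem_filter, Finset.mem_range]
            refine ⟨by omega, by omega⟩
        · refine ⟨q + 1, fun d hd => ?_⟩
          rw [Finset.mem_sdiff] at hd
          rcases hAqmem d hd.1 with h | h
          · exfalso; apply hd.2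
            rw [hA3, Finset.mem_filter, Finset.mem_range]
            refine ⟨by omega, by omega⟩
          · omega
      · refine ⟨b, fun d hd => ?_⟩
        rw [Finset.mem_sdiff] at hd
        have hd' := hd.1
        rw [hAq, Finset.mem_filter, Finset.mem_range] at hd'
        rcases hAqmem d hd.1 with h | h
        · exact h
        · omega
    obtain ⟨e, he⟩ := he
    have h1 : (Aq \ A3).card ≤ 1 := by
      calc (Aq \ A3).card ≤ ({e} : Finset ℕ).card :=
            Finset.card_le_card (fun d hd => by simp [he d hd])
        _ = 1 := Finset.card_singleton e
    omega
  · -- b = q - 1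
    have h1 : (Aq \ A3).card ≤ 1 := by
      have : Aq \ A3 ⊆ {q - 1} := by
        intro d hd
        rw [Finset.mem_sdiff] at hd
        have hd' := hd.1
        rw [hAq, Finset.mem_filter, Finset.mem_range] at hd'
        rcases hAqmem d hd.1 with h | h <;> simp <;> omega
      calc (Aq \ A3).card ≤ ({q-1} : Finset ℕ).card := Finset.card_le_card this
        _ = 1 := Finset.card_singleton _
    omega
  · -- exceptional prime
    have hk1 : 1 ≤ k := by have := i₀.pos; omega
    have hBadk' : Bad.card ≤ k - 1 := by
      calc Bad.card ≤ ((Finset.univ.erase i₀ : Finset (Fin k)).image c).card := by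
            refine Finset.card_le_card (hBadsub _ (fun i hi d hd => ?_))
            have : i = i₀ := by
              by_contra hne
              exact hi (Finset.mem_erase.mpr ⟨hne, Finset.mem_univ i⟩)
            subst this
            have := hge i
            omega
        _ ≤ (Finset.univ.erase i₀ : Finset (Fin k)).card := Finset.card_image_le
        _ = k - 1 := by rw [Finset.card_erase_of_mem (Finset.mem_univ i₀)]; simp
    have h2 : (Aq \ A3).card ≤ 2 := by
      have : Aq \ A3 ⊆ {b, b + q} := by
        intro d hd
        rw [Finset.mem_sdiff] at hd
        rcases hAqmem d hd.1 with h | h <;> simp [h]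
      calc (Aq \ A3).card ≤ ({b, b + q} : Finset ℕ).card := Finset.card_le_card this
        _ ≤ 2 := Finset.card_insert_le _ _ |>.trans (by simp)
    omega

lemma aux_not_dvd {n : ℕ} [NeZero n] {r : ℕ} (hr : r ∣ n) (w u : ZMod n)
    (h : w.val % r ≠ u.val % r) : ¬ r ∣ (w - u).val := by
  intro hdvd
  apply h
  have key : ∀ x : ZMod n, ((x.val : ℕ) : ZMod r) = ZMod.castHom hr (ZMod r) x := by
    intro x
    conv_rhs => rw [← ZMod.natCast_rightInverse x]
    rw [map_natCast]
  have h1 : ((w - u).val : ZMod r) = 0 := (ZMod.natCast_eq_zero_iff _ _).mpr hdvd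
  rw [key, map_sub, ← key, ← key, sub_eq_zero] at h1
  exact (ZMod.natCast_eq_natCast_iff' _ _ _).mp h1

theorem stmt13 (q k : ℕ) (hq : q.Prime) (hq3 : q % 3 = 1) (hk : k = 2 * (q - 1) / 3)
    (p : Fin k → ℕ) (hp : ∀ i, (p i).Prime) (hinj : Function.Injective p)
    (hge : ∀ i, q + 3 ≤ p i)
    (n : ℕ) (hn : n = 3 * q * ∏ i, p i)
    (y : ZMod n) (hy3 : y.val % 3 = 1) (hyq : y.val % q = q - 1)
    (hyp : ∀ i, y.val % p i = p i - 1) :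
    IsTotalDomSet (unitaryCayley n)
      ({x : ZMod n | ∃ j : ℕ, j ≤ q + 1 ∧ x = (j : ZMod n)} ∪ {y}) ∧
    ({x : ZMod n | ∃ j : ℕ, j ≤ q + 1 ∧ x = (j : ZMod n)} ∪ {y} : Set (ZMod n)).ncard
      = q + 3 := by
  have hq7 : 7 ≤ q := by
    by_contra h
    push_neg at h
    interval_cases q <;> first | omega | exact absurd hq (by norm_num)
  set m := q / 3 with hm
  have hqm : q = 3 * m + 1 := by omega
  have hk' : k = 2 * m := by omega
  have hP1 : 1 ≤ ∏ i, p i := Finset.one_le_prod' (fun i _ => (hp i).one_lt.le)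
  have hn2 : q + 2 < n := by
    have h1 : 3 * q * 1 ≤ 3 * q * ∏ i, p i := Nat.mul_le_mul_left _ hP1
    omega
  haveI : NeZero n := ⟨by omega⟩
  haveI : Fact (1 < n) := ⟨by omega⟩
  have h3n : (3 : ℕ) ∣ n := ⟨q * ∏ i, p i, by rw [hn]; ring⟩
  have hqn : q ∣ n := ⟨3 * ∏ i, p i, by rw [hn]; ring⟩
  have hpn : ∀ i, p i ∣ n := fun i => by
    rw [hn]; exact (Finset.dvd_prod_of_mem p (Finset.mem_univ i)).mul_left (3 * q)
  have hadj : ∀ w u : ZMod n, w.val % 3 ≠ u.val % 3 → w.val % q ≠ u.val % q →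
      (∀ i, w.val % p i ≠ u.val % p i) → (unitaryCayley n).Adj w u := by
    intro w u h3 hq' hp'
    have hcop : Nat.Coprime ((w - u).val) n := by
      obtain ⟨x, hx⟩ : ∃ x, (w - u).val = x := ⟨_, rfl⟩
      rw [hx, hn, Nat.coprime_mul_iff_right, Nat.coprime_mul_iff_right, ← hx]
      refine ⟨⟨?_, ?_⟩, ?_⟩
      · exact ((Nat.prime_three.coprime_iff_not_dvd).mpr (aux_not_dvd h3n w u h3)).symm
      · exact ((hq.coprime_iff_not_dvd).mpr (aux_not_dvd hqn w u hq')).symm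
      · exact Nat.Coprime.prod_right fun i _ =>
          (((hp i).coprime_iff_not_dvd).mpr (aux_not_dvd (hpn i) w u (hp' i))).symm
    have hu : IsUnit (w - u) := by
      have := (ZMod.isUnit_iff_coprime ((w - u).val) n).mpr hcop
      rwa [ZMod.natCast_rightInverse (w - u)] at this
    refine ⟨?_, hu⟩
    intro hwu
    rw [hwu, sub_self] at hu
    exact not_isUnit_zero hu
  constructor
  · intro v
    by_cases hcase : v.val % 3 = 1 ∨ v.val % q = q - 1 ∨ ∃ i₀, v.val % p i₀ = p i₀ - 1
    · obtain ⟨d, hd1, hd2, hd3, hd4⟩ := aux_exists_good q m k hqm hq7 hk' p hge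
        (v.val % 3) (v.val % q) (fun i => v.val % p i)
        (Nat.mod_lt _ (by omega)) hcase
      refine ⟨(d : ZMod n), Or.inl ⟨d, hd1, rfl⟩, ?_⟩
      have hdv : ((d : ZMod n)).val = d := ZMod.val_cast_of_lt (by omega)
      refine hadj v _ ?_ ?_ ?_ <;> rw [hdv]
      · exact fun h => hd2 h.symm
      · exact fun h => hd3 h.symm
      · exact fun i h => hd4 i h.symm
    · push_neg at hcase
      obtain ⟨h1, h2, h3⟩ := hcase
      refine ⟨y, Or.inr rfl, hadj v y ?_ ?_ ?_⟩
      · rw [hy3]; exact h1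
      · rw [hyq]; exact h2
      · intro i; rw [hyp i]; exact h3 i
  · have hAset : {x : ZMod n | ∃ j : ℕ, j ≤ q + 1 ∧ x = (j : ZMod n)}
        = ↑((Finset.range (q + 2)).image (fun j : ℕ => (j : ZMod n))) := by
      ext x
      simp only [Set.mem_setOf_eq, Finset.coe_image, Set.mem_image, Finset.mem_coe,
        Finset.coe_range, Set.mem_Iio]
      constructor
      · rintro ⟨j, hj, rfl⟩; exact ⟨j, by omega, rfl⟩
      · rintro ⟨j, hj, rfl⟩; exact ⟨j, by omega, rfl⟩
    have hinjcast : Set.InjOn (fun j : ℕ => (j : ZMod n)) ↑(Finset.range (q + 2)) := by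
      intro x hx y' hy' hxy
      simp only [Finset.coe_range, Set.mem_Iio] at hx hy'
      have := congrArg ZMod.val hxy
      rwa [ZMod.val_cast_of_lt (by omega), ZMod.val_cast_of_lt (by omega)] at this
    have hycard : y ∉ {x : ZMod n | ∃ j : ℕ, j ≤ q + 1 ∧ x = (j : ZMod n)} := by
      rintro ⟨j, hj, hyj⟩
      have hyv : y.val = j := by rw [hyj]; exact ZMod.val_cast_of_lt (by omega)
      rw [hyv] at hy3 hyq
      have hj2 : j = q * (j / q) + (q - 1) := by
        rw [← hyq]; exact (Nat.div_add_mod j q).symm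
      have hj3 : j / q < 2 := Nat.div_lt_of_lt_mul (by omega)
      have hjq : j = q - 1 := by interval_cases h : j / q <;> omega
      omega
    have hdisj : Disjoint {x : ZMod n | ∃ j : ℕ, j ≤ q + 1 ∧ x = (j : ZMod n)}
        ({y} : Set (ZMod n)) := Set.disjoint_singleton_right.mpr hycard
    rw [Set.ncard_union_eq hdisj (by rw [hAset]; exact (Finset.finite_toSet _))
      (Set.finite_singleton y), hAset, Set.ncard_singleton, Set.ncard_coe_finset,
      Finset.card_image_of_injOn hinjcast, Finset.card_range]
end

section
/- For each positive integer j, there exists an integer n with more than j distinct prime factors such that the total domination number of the unitary Cayley graph X_n is strictly less than g(n), where g is Jacobsthal's function. -/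
open Finset

lemma filt_card {t L : ℕ} {P Q' : ℕ → Prop} [DecidablePred P] [DecidablePred Q']
    (h : ∀ i < L, (P (t + i) ↔ Q' i)) :
    ((Finset.Ico t (t + L)).filter P).card = ((Finset.range L).filter Q').card := by
  have : Finset.Ico t (t + L) = (Finset.Ico 0 L).map (addLeftEmbedding t) := by
    rw [Finset.map_add_left_Ico]; simp
  rw [this, ← Finset.range_eq_Ico, Finset.filter_map, Finset.card_map]
  congr 1
  apply Finset.filter_congr
  intro i hi
  simp only [Finset.mem_range] at hi
  simpa [addLeftEmbedding] using h i hi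

lemma cop15_mod (x : ℕ) : Nat.Coprime x 15 ↔ Nat.Coprime (x % 15) 15 := by
  unfold Nat.Coprime
  rw [Nat.gcd_comm x 15, Nat.gcd_comm (x % 15) 15, Nat.gcd_rec 15 x,
    Nat.gcd_rec 15 (x % 15), Nat.mod_mod_of_dvd _ dvd_rfl]

/-- one period of plain coprime-to-15 counting -/
lemma period_plain (t : ℕ) : ((Finset.Ico t (t + 15)).filter (fun x => Nat.Coprime x 15)).card = 8 := by
  have h15 : t % 15 < 15 := Nat.mod_lt _ (by norm_num)
  rw [filt_card (Q' := fun i => Nat.Coprime ((t % 15 + i) % 15) 15)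
    (fun i hi => by have hm : (t + i) % 15 = (t % 15 + i) % 15 := by omega
                    rw [cop15_mod, hm])]
  revert h15
  generalize t % 15 = r
  intro h15
  interval_cases r <;> decide

lemma blocks_plain (s t : ℕ) :
    ((Finset.Ico t (t + 15 * s)).filter (fun x => Nat.Coprime x 15)).card = 8 * s := by
  induction s generalizing t with
  | zero => simp
  | succ m ih =>
      have he : t + 15 * (m + 1) = t + 15 * m + 15 := by ring
      have hsplit : Finset.Ico t (t + 15 * (m + 1)) =
          Finset.Ico t (t + 15 * m) ∪ Finset.Ico (t + 15 * m) (t + 15 * m + 15) := by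
        rw [he, Finset.Ico_union_Ico_eq_Ico (by omega) (by omega)]
      rw [hsplit, Finset.filter_union, Finset.card_union_of_disjoint
        (Finset.disjoint_filter_filter (Finset.Ico_disjoint_Ico_consecutive _ _ _)),
        ih, period_plain]
      ring

/-- the short window at offset ≡ 3 (mod 15) has exactly 3 coprimes -/
lemma window8 (t : ℕ) (ht : t % 15 = 3) :
    ((Finset.Ico t (t + 8)).filter (fun x => Nat.Coprime x 15)).card = 3 := by
  rw [filt_card (Q' := fun i => Nat.Coprime ((3 + i) % 15) 15)
    (fun i hi => by have hm : (t + i) % 15 = (3 + i) % 15 := by omega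
                    rw [cop15_mod, hm])]
  decide

def B0 : Finset ℕ := {0, 2, 4, 6, 7, 8, 13, 14}

/-- coverage of the base pattern: at least 4 coprime differences -/
lemma base_cov (a : ℕ) (ha : 15 ≤ a) :
    4 ≤ (B0.filter (fun d => Nat.Coprime (a - d) 15)).card := by
  have hcongr : B0.filter (fun d => Nat.Coprime (a - d) 15)
      = B0.filter (fun d => Nat.Coprime ((a % 15 + 15 - d) % 15) 15) := by
    apply Finset.filter_congr
    intro d hd
    have hd15 : d < 15 := by fin_cases hd <;> norm_num
    have hm : (a - d) % 15 = (a % 15 + 15 - d) % 15 := by omega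
    rw [cop15_mod, hm]
  rw [hcongr]
  have h15 : a % 15 < 15 := Nat.mod_lt _ (by norm_num)
  revert h15
  generalize a % 15 = r
  intro h15
  interval_cases r <;> decide

/-- one period of the subtraction-coprime counting -/
lemma period_sub (a t : ℕ) (h : t + 15 ≤ a) :
    ((Finset.Ico t (t + 15)).filter (fun d => Nat.Coprime (a - d) 15)).card = 8 := by
  rw [filt_card (Q' := fun i => Nat.Coprime (((a - t) % 15 + 15 - i) % 15) 15)
    (fun i hi => by
      have hm : (a - (t + i)) % 15 = ((a - t) % 15 + 15 - i) % 15 := by omega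
      rw [cop15_mod, hm])]
  have h15 : (a - t) % 15 < 15 := Nat.mod_lt _ (by norm_num)
  revert h15
  generalize (a - t) % 15 = r
  intro h15
  interval_cases r <;> decide

lemma blocks_sub (s : ℕ) (a t : ℕ) (h : t + 15 * s ≤ a) :
    ((Finset.Ico t (t + 15 * s)).filter (fun d => Nat.Coprime (a - d) 15)).card = 8 * s := by
  induction s generalizing t with
  | zero => simp
  | succ m ih =>
      have he : t + 15 * (m + 1) = t + 15 * m + 15 := by ring
      have hsplit : Finset.Ico t (t + 15 * (m + 1)) =
          Finset.Ico t (t + 15 * m) ∪ Finset.Ico (t + 15 * m) (t + 15 * m + 15) := by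
        rw [he, Finset.Ico_union_Ico_eq_Ico (by omega) (by omega)]
      rw [hsplit, Finset.filter_union, Finset.card_union_of_disjoint
        (Finset.disjoint_filter_filter (Finset.Ico_disjoint_Ico_consecutive _ _ _)),
        ih _ (by omega), period_sub a _ (by omega)]
      ring

/-- generalized CRT over a finset of indices -/
lemma crt {ι : Type*} [DecidableEq ι] (I : Finset ι) (m : ι → ℕ) (r : ι → ℤ)
    (hcop : ∀ i ∈ I, ∀ j ∈ I, i ≠ j → Nat.Coprime (m i) (m j)) :
    ∃ X : ℤ, ∀ i ∈ I, (m i : ℤ) ∣ X - r i := by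
  induction I using Finset.induction with
  | empty => exact ⟨0, by simp⟩
  | @insert b s hb ih =>
      obtain ⟨X, hX⟩ := ih (fun i hi j hj hij => hcop i (Finset.mem_insert_of_mem hi)
        j (Finset.mem_insert_of_mem hj) hij)
      have hcb : IsCoprime (m b : ℤ) ((∏ i ∈ s, m i : ℕ) : ℤ) := by
        rw [Nat.isCoprime_iff_coprime]
        exact Nat.Coprime.prod_right (fun i hi => hcop b (Finset.mem_insert_self _ _)
          i (Finset.mem_insert_of_mem hi) (fun h => hb (h ▸ hi)))
      obtain ⟨u, v, huv⟩ := hcb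
      refine ⟨X + (∏ i ∈ s, (m i : ℕ) : ℕ) * (v * (r b - X)), fun i hi => ?_⟩
      rcases Finset.mem_insert.mp hi with rfl | hi
      · exact ⟨-(u * (r i - X)), by push_cast at huv ⊢; linear_combination (r i - X) * huv⟩
      · have h1 : (m i : ℤ) ∣ X - r i := hX i hi
        have h2 : (m i : ℤ) ∣ ((∏ k ∈ s, (m k : ℕ) : ℕ) : ℤ) := by
          exact_mod_cast Int.natCast_dvd_natCast.mpr (Finset.dvd_prod_of_mem _ hi)
        have : X + (∏ k ∈ s, (m k : ℕ) : ℕ) * (v * (r b - X)) - r i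
            = (X - r i) + ((∏ k ∈ s, (m k : ℕ) : ℕ) : ℤ) * (v * (r b - X)) := by ring
        rw [this]
        exact dvd_add h1 (Dvd.dvd.mul_right h2 _)

lemma exists_primes (k M : ℕ) : ∃ Q : Finset ℕ, Q.card = k ∧ ∀ p ∈ Q, p.Prime ∧ M < p := by
  induction k with
  | zero => exact ⟨∅, by simp⟩
  | succ m ih =>
      obtain ⟨Q, hQc, hQ⟩ := ih
      obtain ⟨p, hple, hpp⟩ := Nat.exists_infinite_primes (max M (Q.sup id) + 1)
      have hpM : M < p := by
        have := le_max_left M (Q.sup id); omega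
      have hpQ : p ∉ Q := by
        intro hmem
        have h1 : p ≤ Q.sup id := Finset.le_sup (f := id) hmem
        have := le_max_right M (Q.sup id); omega
      refine ⟨insert p Q, ?_, ?_⟩
      · rw [Finset.card_insert_of_notMem hpQ, hQc]
      · intro q hq
        rcases Finset.mem_insert.mp hq with rfl | hq
        · exact ⟨hpp, hpM⟩
        · exact hQ q hq

set_option maxHeartbeats 1000000 in
theorem stmt14 (j : ℕ) (hj : 0 < j) :
    ∃ n : ℕ, j < n.primeFactors.card ∧
      totalDomNum (unitaryCayley n) < jacobsthal n := by
  classical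
  obtain ⟨Q, hQcard, hQ⟩ := exists_primes (8 * j + 3) (15 * j + 15)
  set P : ℕ := ∏ q ∈ Q, q with hP
  set n : ℕ := 15 * P with hn
  have hQprime : ∀ q ∈ Q, q.Prime := fun q hq => (hQ q hq).1
  have hQbig : ∀ q ∈ Q, 15 * j + 15 < q := fun q hq => (hQ q hq).2
  have hQne : Q.Nonempty := Finset.card_pos.mp (by omega)
  have hPbig : 15 * j + 15 < P := by
    obtain ⟨q, hq⟩ := hQne
    exact lt_of_lt_of_le (hQbig q hq)
      (Finset.single_le_prod' (fun i hi => (hQprime i hi).one_lt.le.trans' (by omega)) hq)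
  have hnbig : 15 * j + 15 < n := by
    have : P ≤ 15 * P := Nat.le_mul_of_pos_left _ (by norm_num)
    omega
  have hn0 : n ≠ 0 := by omega
  haveI : NeZero n := ⟨hn0⟩
  haveI : Fact (1 < n) := ⟨by omega⟩
  refine ⟨n, ?_, ?_⟩
  · -- many prime factors
    have hsub : insert 3 Q ⊆ n.primeFactors := by
      intro p hp
      rcases Finset.mem_insert.mp hp with rfl | hp
      · exact Nat.mem_primeFactors.mpr ⟨by norm_num, Dvd.dvd.trans (by norm_num) (Dvd.intro P rfl), hn0⟩
      · exact Nat.mem_primeFactors.mpr ⟨hQprime p hp,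
          (Finset.dvd_prod_of_mem _ hp).trans (Dvd.intro_left 15 rfl), hn0⟩
    have h3Q : 3 ∉ Q := fun h => by have := hQbig 3 h; omega
    have := Finset.card_le_card hsub
    rw [Finset.card_insert_of_notMem h3Q, hQcard] at this
    omega
  · -- total domination number < jacobsthal
    -- Part A: totalDomNum ≤ 15j + 8
    have hA : totalDomNum (unitaryCayley n) ≤ 15 * j + 8 := by
      set Dnat : Finset ℕ := B0 ∪ Finset.Ico 15 (15 + 15 * j) with hDnat
      have hB0lt : ∀ d ∈ B0, d < 15 := by decide
      have hDlt : ∀ d ∈ Dnat, d < 15 * j + 15 := by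
        intro d hd
        rcases Finset.mem_union.mp hd with hd | hd
        · have := hB0lt d hd; omega
        · have := (Finset.mem_Ico.mp hd).2; omega
      have hdisj : Disjoint B0 (Finset.Ico 15 (15 + 15 * j)) := by
        rw [Finset.disjoint_left]
        intro d hd hd2
        have := hB0lt d hd
        have := (Finset.mem_Ico.mp hd2).1
        omega
      have hDcard : Dnat.card = 15 * j + 8 := by
        rw [hDnat, Finset.card_union_of_disjoint hdisj, Nat.card_Ico]
        have : B0.card = 8 := by decide
        omega
      set D : Finset (ZMod n) := Dnat.image (Nat.cast : ℕ → ZMod n) with hD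
      have hinj : Set.InjOn (Nat.cast : ℕ → ZMod n) ↑Dnat := by
        intro x hx y hy hxy
        have hx' : x < n := by have := hDlt x hx; omega
        have hy' : y < n := by have := hDlt y hy; omega
        have := congrArg ZMod.val hxy
        rwa [ZMod.val_cast_of_lt hx', ZMod.val_cast_of_lt hy'] at this
      have hDcard2 : D.card = 15 * j + 8 := by
        rw [hD, Finset.card_image_of_injOn hinj, hDcard]
      have htot : IsTotalDomSet (unitaryCayley n) ↑D := by
        intro v
        set a : ℕ := v.val + n with ha
        have han : n ≤ a := Nat.le_add_left _ _
        have hcand : 8 * j + 4 ≤ (Dnat.filter (fun d => Nat.Coprime (a - d) 15)).card := by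
          rw [hDnat, Finset.filter_union, Finset.card_union_of_disjoint
            (Finset.disjoint_filter_filter hdisj)]
          have h1 := base_cov a (by omega)
          have h2 := blocks_sub j a 15 (by omega)
          omega
        have hblock : (Dnat.filter (fun d => ∃ q ∈ Q, q ∣ (a - d))).card ≤ 8 * j + 3 := by
          have hsub2 : Dnat.filter (fun d => ∃ q ∈ Q, q ∣ (a - d)) ⊆
              Q.biUnion (fun q => Dnat.filter (fun d => q ∣ (a - d))) := by
            intro d hd
            obtain ⟨hdD, q, hqQ, hqd⟩ := Finset.mem_filter.mp hd
            exact Finset.mem_biUnion.mpr ⟨q, hqQ, Finset.mem_filter.mpr ⟨hdD, hqd⟩⟩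
          refine le_trans (Finset.card_le_card hsub2) (le_trans Finset.card_biUnion_le ?_)
          calc ∑ q ∈ Q, (Dnat.filter (fun d => q ∣ (a - d))).card
              ≤ ∑ q ∈ Q, 1 := by
                refine Finset.sum_le_sum (fun q hq => Finset.card_le_one.mpr ?_)
                intro d1 h1 d2 h2
                obtain ⟨hd1, hq1⟩ := Finset.mem_filter.mp h1
                obtain ⟨hd2, hq2⟩ := Finset.mem_filter.mp h2
                have hl1 := hDlt d1 hd1
                have hl2 := hDlt d2 hd2
                rcases le_total d1 d2 with hle | hle
                · have hdvd : q ∣ d2 - d1 := by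
                    have : (a - d1) - (a - d2) = d2 - d1 := by omega
                    exact this ▸ Nat.dvd_sub hq1 hq2
                  rcases Nat.eq_zero_or_pos (d2 - d1) with h0 | h0
                  · omega
                  · have := Nat.le_of_dvd h0 hdvd
                    have := hQbig q hq
                    omega
                · have hdvd : q ∣ d1 - d2 := by
                    have : (a - d2) - (a - d1) = d1 - d2 := by omega
                    exact this ▸ Nat.dvd_sub hq2 hq1
                  rcases Nat.eq_zero_or_pos (d1 - d2) with h0 | h0
                  · omega
                  · have := Nat.le_of_dvd h0 hdvd
                    have := hQbig q hq
                    omega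
            _ = 8 * j + 3 := by rw [Finset.sum_const, smul_eq_mul, mul_one, hQcard]
        have hsd : 0 < ((Dnat.filter (fun d => Nat.Coprime (a - d) 15)) \
            (Dnat.filter (fun d => ∃ q ∈ Q, q ∣ (a - d)))).card := by
          have := Finset.le_card_sdiff (Dnat.filter (fun d => ∃ q ∈ Q, q ∣ (a - d)))
            (Dnat.filter (fun d => Nat.Coprime (a - d) 15))
          omega
        obtain ⟨d, hd⟩ := Finset.card_pos.mp hsd
        rw [Finset.mem_sdiff, Finset.mem_filter] at hd
        obtain ⟨⟨hdD, hcop15⟩, hnb⟩ := hd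
        have hnb' : ∀ q ∈ Q, ¬ q ∣ (a - d) := by
          intro q hq hdvd
          exact hnb (Finset.mem_filter.mpr ⟨hdD, q, hq, hdvd⟩)
        have hcopn : Nat.Coprime (a - d) n := by
          rw [hn]
          exact Nat.Coprime.mul_right hcop15
            (Nat.Coprime.prod_right (fun q hq =>
              (((hQprime q hq).coprime_iff_not_dvd).mpr (hnb' q hq)).symm))
        have hunit : IsUnit ((a - d : ℕ) : ZMod n) := (ZMod.isUnit_iff_coprime _ n).mpr hcopn
        have hdlt : d < n := by have := hDlt d hdD; omega
        have hdle : d ≤ a := by omega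
        have hva : ((a : ℕ) : ZMod n) = v := by
          rw [ha]
          push_cast
          rw [ZMod.natCast_self, add_zero, ZMod.natCast_rightInverse v]
        have hcast : ((a - d : ℕ) : ZMod n) = v - (d : ZMod n) := by
          rw [Nat.cast_sub hdle, hva]
        rw [hcast] at hunit
        have hne : v ≠ (d : ZMod n) := by
          intro h
          rw [h, sub_self] at hunit
          exact zero_ne_one (isUnit_zero_iff.mp hunit)
        exact ⟨(d : ZMod n), Finset.mem_coe.mpr (Finset.mem_image_of_mem _ hdD), hne, hunit⟩
      have hmem : (15 * j + 8) ∈ {k | ∃ D : Set (ZMod n),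
          IsTotalDomSet (unitaryCayley n) D ∧ D.ncard = k} :=
        ⟨↑D, htot, by rw [Set.ncard_coe_finset, hDcard2]⟩
      exact Nat.sInf_le hmem
    -- Part B: 15j + 8 < jacobsthal n
    have hB : 15 * j + 8 < jacobsthal n := by
      set Pfin : Finset ℕ :=
        (Finset.Ico 3 (3 + (15 * j + 8))).filter (fun x => Nat.Coprime x 15) with hPfin
      have hPcard : Pfin.card = 8 * j + 3 := by
        have hsplit : Finset.Ico 3 (3 + (15 * j + 8)) =
            Finset.Ico 3 (3 + 15 * j) ∪ Finset.Ico (3 + 15 * j) (3 + 15 * j + 8) := by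
          rw [Finset.Ico_union_Ico_eq_Ico (by omega) (by omega)]
          congr 1
        rw [hPfin, hsplit, Finset.filter_union, Finset.card_union_of_disjoint
          (Finset.disjoint_filter_filter (Finset.Ico_disjoint_Ico_consecutive _ _ _)),
          blocks_plain j 3, window8 (3 + 15 * j) (by omega)]
      have e : (Pfin : Finset ℕ) ≃ (Q : Finset ℕ) :=
        Finset.equivOfCardEq (by rw [hPcard, hQcard])
      set f : ℕ → ℕ := fun x => if h : x ∈ Pfin then (e ⟨x, h⟩ : ℕ) else 0 with hf
      have hfQ : ∀ x ∈ Pfin, f x ∈ Q := by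
        intro x hx
        rw [hf]
        simp only [dif_pos hx]
        exact (e ⟨x, hx⟩).2
      have hfinj : ∀ x ∈ Pfin, ∀ y ∈ Pfin, x ≠ y → f x ≠ f y := by
        intro x hx y hy hxy
        rw [hf]
        simp only [dif_pos hx, dif_pos hy]
        intro h
        exact hxy (congrArg Subtype.val (e.injective (Subtype.coe_injective h)))
      set T : ℕ := 3 + (15 * j + 8) with hT
      have hTnot : T ∉ Pfin := by
        intro h
        have := (Finset.mem_Ico.mp (Finset.mem_filter.mp h).1).2
        omega
      set mm : ℕ → ℕ := fun x => if x = T then 15 else f x with hmm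
      set rr : ℕ → ℤ := fun x => if x = T then 3 else 3 - (x : ℤ) with hrr
      have hxT : ∀ x ∈ Pfin, x ≠ T := fun x hx h => hTnot (h ▸ hx)
      have hcop15fx : ∀ x ∈ Pfin, Nat.Coprime 15 (f x) := by
        intro x hx
        have hq := hfQ x hx
        have : ¬ (f x) ∣ 15 := by
          intro hdvd
          have := Nat.le_of_dvd (by norm_num) hdvd
          have := hQbig _ hq
          omega
        exact (((hQprime _ hq).coprime_iff_not_dvd).mpr this).symm
      have hpair : ∀ x ∈ insert T Pfin, ∀ y ∈ insert T Pfin, x ≠ y →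
          Nat.Coprime (mm x) (mm y) := by
        intro x hx y hy hxy
        rcases Finset.mem_insert.mp hx with rfl | hx
        · rcases Finset.mem_insert.mp hy with rfl | hy
          · exact absurd rfl hxy
          · rw [hmm]
            simp only [if_pos rfl, if_neg (hxT y hy)]
            exact hcop15fx y hy
        · rcases Finset.mem_insert.mp hy with rfl | hy
          · rw [hmm]
            simp only [if_pos rfl, if_neg (hxT x hx)]
            exact (hcop15fx x hx).symm
          · rw [hmm]
            simp only [if_neg (hxT x hx), if_neg (hxT y hy)]
            exact (Nat.coprime_primes (hQprime _ (hfQ x hx)) (hQprime _ (hfQ y hy))).mpr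
              (hfinj x hx y hy hxy)
      obtain ⟨X, hX⟩ := crt (insert T Pfin) mm rr hpair
      have hX15 : (15 : ℤ) ∣ X - 3 := by
        have := hX T (Finset.mem_insert_self _ _)
        rw [hmm, hrr] at this
        simpa using this
      have hXq : ∀ x ∈ Pfin, (f x : ℤ) ∣ X - (3 - (x : ℤ)) := by
        intro x hx
        have := hX x (Finset.mem_insert_of_mem hx)
        rw [hmm, hrr] at this
        simpa [if_neg (hxT x hx)] using this
      -- the key claim: no integer in the window is coprime to n
      have hkey : ∀ i : ℕ, i < 15 * j + 8 → Int.gcd (X + (i : ℤ)) n ≠ 1 := by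
        intro i hi hgcd
        by_cases hc : Nat.Coprime (3 + i) 15
        · have hmem : (3 + i) ∈ Pfin := by
            rw [hPfin]
            exact Finset.mem_filter.mpr ⟨Finset.mem_Ico.mpr ⟨by omega, by omega⟩, hc⟩
          set q := f (3 + i) with hq
          have hqQ : q ∈ Q := hfQ _ hmem
          have h1 : (q : ℤ) ∣ X + (i : ℤ) := by
            have := hXq _ hmem
            have heq : X - (3 - ((3 + i : ℕ) : ℤ)) = X + (i : ℤ) := by push_cast; ring
            rwa [heq] at this
          have h2 : (q : ℤ) ∣ (n : ℤ) := by
            exact_mod_cast Int.natCast_dvd_natCast.mpr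
              ((Finset.dvd_prod_of_mem _ hqQ).trans (Dvd.intro_left 15 rfl))
          have := Int.dvd_gcd h1 h2
          rw [hgcd] at this
          have hq1 : q ∣ 1 := by exact_mod_cast this
          have := (hQprime _ hqQ).two_le
          have := Nat.le_of_dvd one_pos hq1
          omega
        · set g := Nat.gcd (3 + i) 15 with hg
          have hg1 : g ≠ 1 := hc
          have hgdvd15 : g ∣ 15 := Nat.gcd_dvd_right _ _
          have hgdvd : g ∣ 3 + i := Nat.gcd_dvd_left _ _
          have hgpos : 0 < g := Nat.gcd_pos_of_pos_right _ (by norm_num)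
          have h1 : (g : ℤ) ∣ X + (i : ℤ) := by
            have e1 : (g : ℤ) ∣ X - 3 :=
              dvd_trans (Int.natCast_dvd_natCast.mpr hgdvd15) hX15
            have e2 : (g : ℤ) ∣ ((3 + i : ℕ) : ℤ) := Int.natCast_dvd_natCast.mpr hgdvd
            have heq : X + (i : ℤ) = (X - 3) + ((3 + i : ℕ) : ℤ) := by push_cast; ring
            rw [heq]
            exact dvd_add e1 e2
          have h2 : (g : ℤ) ∣ (n : ℤ) := by
            refine Int.natCast_dvd_natCast.mpr (hgdvd15.trans ?_)
            exact Dvd.intro P rfl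
          have := Int.dvd_gcd h1 h2
          rw [hgcd] at this
          have hg2 : g ∣ 1 := by exact_mod_cast this
          exact hg1 (Nat.dvd_one.mp hg2)
      -- jacobsthal is attained
      have hSne : ∃ m, m ∈ {m | 0 < m ∧ ∀ x : ℤ, ∃ i : ℕ, i < m ∧ Int.gcd (x + i) n = 1} := by
        refine ⟨n, by omega, fun x => ?_⟩
        refine ⟨((1 - x) % (n : ℤ)).toNat, ?_, ?_⟩
        · have h1 : (0 : ℤ) ≤ (1 - x) % (n : ℤ) := Int.emod_nonneg _ (by exact_mod_cast hn0)
          have h2 : (1 - x) % (n : ℤ) < n := Int.emod_lt_of_pos _ (by exact_mod_cast Nat.pos_of_ne_zero hn0)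
          omega
        · have h1 : (0 : ℤ) ≤ (1 - x) % (n : ℤ) := Int.emod_nonneg _ (by exact_mod_cast hn0)
          have h3 : (((1 - x) % (n : ℤ)).toNat : ℤ) = (1 - x) % (n : ℤ) := Int.toNat_of_nonneg h1
          have h4 : (n : ℤ) ∣ (x + ((1 - x) % (n : ℤ)).toNat) - 1 := by
            rw [h3]
            have := Int.emod_emod_of_dvd (1 - x) (dvd_refl (n : ℤ))
            have h5 : (1 - x) % (n : ℤ) = (1 - x) - (n : ℤ) * ((1 - x) / (n : ℤ)) := by
              rw [Int.emod_def]
            rw [h5]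
            exact ⟨-((1 - x) / (n : ℤ)), by ring⟩
          obtain ⟨c, hc⟩ := h4
          set y := x + (((1 - x) % (n : ℤ)).toNat : ℤ) with hy
          have hy1 : y = 1 + (n : ℤ) * c := by rw [hy]; linarith [hc]
          have hdy : (↑(Int.gcd y (n : ℤ)) : ℤ) ∣ y := Int.gcd_dvd_left _ _
          have hdn : (↑(Int.gcd y (n : ℤ)) : ℤ) ∣ (n : ℤ) := Int.gcd_dvd_right _ _
          have hd1 : (↑(Int.gcd y (n : ℤ)) : ℤ) ∣ 1 := by
            have : y - (n : ℤ) * c = 1 := by linarith [hy1]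
            calc (↑(Int.gcd y (n : ℤ)) : ℤ) ∣ y - (n : ℤ) * c :=
                  dvd_sub hdy (hdn.mul_right c)
            _ = 1 := this
          have : Int.gcd y (n : ℤ) ∣ 1 := by exact_mod_cast hd1
          exact Nat.dvd_one.mp this
      have hjmem : jacobsthal n ∈ {m | 0 < m ∧ ∀ x : ℤ, ∃ i : ℕ, i < m ∧ Int.gcd (x + i) n = 1} :=
        Nat.sInf_mem hSne
      by_contra hcon
      push_neg at hcon
      obtain ⟨i, hilt, higcd⟩ := hjmem.2 X
      exact hkey i (by omega) higcd

    omega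
end

section
/- Let G = K[a₁,b₁] × ⋯ × K[a_t,b_t] (direct product of balanced complete multipartite graphs) with 2 ≤ b₁ ≤ b₂ ≤ ⋯ ≤ b_t. Then the upper domination number Γ(G) satisfies Γ(G) ≥ (1/b₁)·∏_{i=1}^t a_i b_i. In fact, if P is one partite set of K[a₁,b₁], then the set of all vertices of G whose first coordinate lies in P is a minimal dominating set of this size. -/
lemma cardS (m k : ℕ) (hm : 0 < m) (hk : 0 < k) :
    Nat.card {z : ZMod (m * k) // z.val % k = 0} = m := by
  haveI : NeZero (m * k) := ⟨(Nat.mul_pos hm hk).ne'⟩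
  have hf : Function.Bijective
      (fun j : Fin m => (⟨((j : ℕ) * k : ℕ), by
        rw [ZMod.val_cast_of_lt (by exact Nat.mul_lt_mul_of_lt_of_le j.isLt le_rfl hk)]
        simp [Nat.mul_mod_left]⟩ : {z : ZMod (m * k) // z.val % k = 0})) := by
    constructor
    · intro j j' h
      have h2 := congrArg (fun z : {z : ZMod (m*k) // z.val % k = 0} => z.1.val) h
      dsimp only at h2
      rw [ZMod.val_cast_of_lt (Nat.mul_lt_mul_of_lt_of_le j.isLt le_rfl hk),
        ZMod.val_cast_of_lt (Nat.mul_lt_mul_of_lt_of_le j'.isLt le_rfl hk)] at h2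
      exact Fin.ext (Nat.eq_of_mul_eq_mul_right hk h2)
    · rintro ⟨z, hz⟩
      have hdvd : k ∣ z.val := Nat.dvd_of_mod_eq_zero hz
      have hlt : z.val < m * k := z.val_lt
      have hq : z.val / k * k = z.val := Nat.div_mul_cancel hdvd
      have hqlt : z.val / k < m := by
        by_contra hc
        push_neg at hc
        have : m * k ≤ z.val / k * k := Nat.mul_le_mul_right k hc
        omega
      refine ⟨⟨z.val / k, hqlt⟩, ?_⟩
      apply Subtype.ext
      simp only []
      rw [hq]
      exact ZMod.natCast_rightInverse z
  rw [Nat.card_congr (Equiv.ofBijective _ hf).symm, Nat.card_eq_fintype_card, Fintype.card_fin]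

theorem stmt16 (t : ℕ) (ht : 0 < t) (a b : Fin t → ℕ) (ha : ∀ i, 0 < a i)
    (hb : 2 ≤ b ⟨0, ht⟩) (hmono : Monotone b) :
    IsMinimalDomSet (multipartiteProd t a b)
      {x | (x ⟨0, ht⟩).val % b ⟨0, ht⟩ = 0} ∧
    ({x : ∀ i, ZMod (a i * b i) | (x ⟨0, ht⟩).val % b ⟨0, ht⟩ = 0}).ncard
        = (∏ i, a i * b i) / b ⟨0, ht⟩ ∧
    (∏ i, a i * b i) / b ⟨0, ht⟩ ≤ upperDomNum (multipartiteProd t a b) := by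
  classical
  set i₀ : Fin t := ⟨0, ht⟩ with hi0
  set G := multipartiteProd t a b with hG
  set D : Set (∀ i, ZMod (a i * b i)) := {x | (x i₀).val % b i₀ = 0} with hD
  have hble : ∀ i, 2 ≤ b i := fun i =>
    le_trans hb (hmono (Fin.le_def.mpr (Nat.zero_le _)))
  haveI hNZ : ∀ i, NeZero (a i * b i) := fun i =>
    ⟨(Nat.mul_pos (ha i) (by have := hble i; omega)).ne'⟩
  have hval1 : ∀ i, ((1 : ZMod (a i * b i)).val % b i) = 1 := by
    intro i
    have h2 : 2 ≤ a i * b i := le_trans (hble i) (Nat.le_mul_of_pos_left _ (ha i))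
    rw [ZMod.val_one_eq_one_mod, Nat.mod_eq_of_lt (show (1:ℕ) < a i * b i by omega)]
    exact Nat.mod_eq_of_lt (by have := hble i; omega)
  have hdom : IsDomSet G D := by
    intro v
    by_cases hv : v ∈ D
    · exact Or.inl hv
    · have hv0 : (v i₀).val % b i₀ ≠ 0 := hv
      set d : ∀ i, ZMod (a i * b i) := fun i => if (v i).val % b i = 0 then 1 else 0 with hd
      have hdval : ∀ i, (d i).val % b i = if (v i).val % b i = 0 then 1 else 0 := by
        intro i
        by_cases hvi : (v i).val % b i = 0
        · simp only [hd, if_pos hvi]; exact hval1 i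
        · simp only [hd, if_neg hvi, ZMod.val_zero, Nat.zero_mod]
      have hdmem : d ∈ D := by
        show (d i₀).val % b i₀ = 0
        rw [hdval i₀, if_neg hv0]
      refine Or.inr ⟨d, hdmem, ?_, fun i => ?_⟩
      · intro h
        have h2 := hdval i₀
        rw [if_neg hv0, ← h] at h2
        exact hv0 h2
      · rw [hdval i]
        by_cases hvi : (v i).val % b i = 0
        · rw [if_pos hvi, hvi]; omega
        · rw [if_neg hvi]; exact hvi
  have hmin : IsMinimalDomSet G D := by
    refine ⟨hdom, ?_⟩
    intro D' h hdom'
    obtain ⟨v, hvD, hvD'⟩ := Set.exists_of_ssubset h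
    rcases hdom' v with h1 | ⟨dd, hdd, hadj⟩
    · exact hvD' h1
    · have hv0 : (v i₀).val % b i₀ = 0 := hvD
      have hd0 : (dd i₀).val % b i₀ = 0 := h.subset hdd
      exact hadj.2 i₀ (hv0.trans hd0.symm)
  have hcard : D.ncard = (∏ i, a i * b i) / b i₀ := by
    rw [← Nat.card_coe_set_eq]
    have e1 : D ≃ ({z : ZMod (a i₀ * b i₀) // z.val % b i₀ = 0} ×
        ∀ j : {j // j ≠ i₀}, ZMod (a j * b j)) :=
      (Equiv.subtypeEquiv (q := fun y => y.1.val % b i₀ = 0)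
        (Equiv.piSplitAt i₀ fun i => ZMod (a i * b i))
        (fun x => Iff.rfl)).trans (Equiv.prodSubtypeFstEquivSubtypeProd
        (p := fun z : ZMod (a i₀ * b i₀) => z.val % b i₀ = 0))
    rw [Nat.card_congr e1, Nat.card_prod,
      cardS _ _ (ha i₀) (by have := hble i₀; omega), Nat.card_pi]
    simp only [Nat.card_zmod]
    have hsplit : (∏ i, a i * b i) = (a i₀ * b i₀) * ∏ j : {j // j ≠ i₀}, (a j * b j) := by
      rw [← Finset.prod_subtype (Finset.univ.erase i₀) (fun j => by simp)
        (fun j => a j * b j)]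
      exact (Finset.mul_prod_erase Finset.univ _ (Finset.mem_univ i₀)).symm
    have hb0 : 0 < b i₀ := by have := hble i₀; omega
    rw [hsplit, show (a i₀ * b i₀) * ∏ j : {j // j ≠ i₀}, (a j * b j)
        = b i₀ * (a i₀ * ∏ j : {j // j ≠ i₀}, (a j * b j)) by ring,
      Nat.mul_div_cancel_left _ hb0]
  have hbdd : BddAbove {k | ∃ D : Set (∀ i, ZMod (a i * b i)), IsMinimalDomSet G D ∧ D.ncard = k} := by
    refine ⟨Nat.card (∀ i, ZMod (a i * b i)), ?_⟩
    rintro k ⟨D', _, rfl⟩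
    rw [← Set.ncard_univ]
    exact Set.ncard_le_ncard (Set.subset_univ _) Set.finite_univ
  refine ⟨hmin, hcard, ?_⟩
  rw [← hcard]
  exact le_csSup hbdd ⟨D, hmin, rfl⟩
end
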